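/- arXiv:math/0011160 — 7 statements merged into one kernel-verified Lean document; each statement's English description precedes it below -/
import Mathlib

section
/- Let R be a commutative associative unital ring over ℤ that is free as a ℤ-module with a distinguished finite basis I containing the unit Ω, such that the structure constants N_{λμ}^ν in this basis are non-negative integers. If J ∈ I satisfies ∑_{μ∈I} N_{Jλ}^μ = 1 for all λ ∈ I, then J is a unit of R, i.e., there exists J⁺ ∈ I with J ⋆ J⁺ = Ω. -/
/-- In a fusion ring (commutative unital ring, free over ℤ with
distinguished finite basis `b` containing the unit `Ω`, non-negative integer
structure constants `N`, and conjugation involution given by evaluation at the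
unit), any basis element `J` with `∑ μ, N J λ μ = 1` for all `λ` is a unit:
there is `J⁺` in the basis with `J ⋆ J⁺ = Ω`. -/
theorem stmt0 {R : Type*} [CommRing R] {I : Type*} [Fintype I] [DecidableEq I]
    (b : Module.Basis I ℤ R) (Ω : I) (hΩ : b Ω = 1)
    (N : I → I → I → ℕ)
    (hN : ∀ lam mu : I, b lam * b mu = ∑ ν, (N lam mu ν : ℤ) • b ν)
    (conj : I → I) (hinv : ∀ lam, conj (conj lam) = lam)
    (hconj : ∀ lam mu, N lam mu Ω = if mu = conj lam then 1 else 0)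
    (J : I) (hJ : ∀ lam, ∑ mu, N J lam mu = 1) :
    ∃ Jp : I, b J * b Jp = b Ω := by
  refine ⟨conj J, ?_⟩
  have h1 : N J (conj J) Ω = 1 := by simp [hconj]
  have hsum := hJ (conj J)
  rw [← Finset.add_sum_erase _ _ (Finset.mem_univ Ω), h1] at hsum
  have hrest : ∑ mu ∈ Finset.univ.erase Ω, N J (conj J) mu = 0 := by omega
  have h0 : ∀ ν, ν ≠ Ω → N J (conj J) ν = 0 := by
    intro ν hν
    exact (Finset.sum_eq_zero_iff.mp hrest) ν (Finset.mem_erase.mpr ⟨hν, Finset.mem_univ ν⟩)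
  rw [hN, Finset.sum_eq_single Ω]
  · rw [h1]; simp
  · intro ν _ hν
    rw [h0 ν hν]; simp
  · intro h; exact absurd (Finset.mem_univ Ω) h
end

section
/- Let S be a unitary symmetric complex |I|×|I| matrix with S_{Ω,μ} ∈ ℝ_{>0} for all μ, and define N_{λμ}^ν = ∑_{κ∈I} S_{κ,λ} S_{κ,μ} \overline{S_{κ,ν}} / S_{κ,Ω}. If J ∈ I satisfies S_{J,Ω} = S_{Ω,Ω} and all N_{λμ}^ν are non-negative integers, then fusion with J defines a permutation of I, i.e., for each λ there is a unique μ with N_{Jλ}^μ = 1 and N_{Jλ}^ν = 0 for ν ≠ μ. -/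
/-- Let `S` be a unitary symmetric matrix with positive row
`S Ω ·`, and define the Verlinde numbers `N` by the Verlinde formula. If all
`N λ μ ν` are non-negative integers and `J` is a simple current, i.e.
`S J Ω = S Ω Ω`, then fusion with `J` defines a permutation of `I`: for each
`λ` there is a unique `μ` with `N J λ μ = 1` and `N J λ ν = 0` for `ν ≠ μ`. -/
theorem stmt3 {I : Type*} [Fintype I] [DecidableEq I] (S : I → I → ℂ) (Ω : I)
    (hunit : ∀ lam mu : I,
      ∑ κ, S κ lam * (starRingEnd ℂ) (S κ mu) = if lam = mu then 1 else 0)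
    (hsym : ∀ lam mu : I, S lam mu = S mu lam)
    (hpos : ∀ mu : I, 0 < (S Ω mu).re ∧ (S Ω mu).im = 0)
    (N : I → I → I → ℂ)
    (hN : ∀ lam mu ν : I,
      N lam mu ν = ∑ κ, S κ lam * S κ mu * (starRingEnd ℂ) (S κ ν) / S κ Ω)
    (hint : ∀ lam mu ν : I, ∃ n : ℕ, N lam mu ν = (n : ℂ))
    (J : I) (hJ : S J Ω = S Ω Ω) :
    ∀ lam : I, ∃! mu : I, N J lam mu = 1 ∧ ∀ ν : I, ν ≠ mu → N J lam ν = 0 := by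
  classical
  -- realness of row Ω
  have hreal : ∀ μ, S Ω μ = (((S Ω μ).re : ℝ) : ℂ) := by
    intro μ
    have h := (hpos μ).2
    exact Complex.ext (by simp) (by simp [h])
  set d : I → ℝ := fun μ => (S Ω μ).re with hd
  have hdpos : ∀ μ, 0 < d μ := fun μ => (hpos μ).1
  have hSΩΩ : S Ω Ω ≠ 0 := by
    intro h
    have := hdpos Ω
    rw [hd] at this
    simp [h] at this
  have hconjΩ : ∀ μ, (starRingEnd ℂ) (S Ω μ) = S Ω μ := by
    intro μ
    rw [hreal μ]
    exact Complex.conj_ofReal _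
  -- orthogonality of row Ω against row κ
  have horth1 : ∀ κ, ∑ μ, S Ω μ * (starRingEnd ℂ) (S κ μ) = if Ω = κ then 1 else 0 := by
    intro κ
    have h := hunit Ω κ
    rw [← h]
    exact Finset.sum_congr rfl fun μ _ => by rw [hsym Ω μ, hsym κ μ]
  have horth2 : ∀ κ, ∑ μ, S κ μ * S Ω μ = if κ = Ω then 1 else 0 := by
    intro κ
    have h := hunit κ Ω
    rw [← h]
    refine Finset.sum_congr rfl fun μ _ => ?_
    rw [hsym κ μ]
    congr 1
    rw [hsym μ Ω]
    exact (hconjΩ μ).symm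
  -- choose the natural numbers
  choose n hn using hint
  -- row sum identity
  have hrow : ∀ lam, ∑ μ, N J lam μ * S Ω μ = S Ω lam := by
    intro lam
    have step : ∀ μ, N J lam μ * S Ω μ
        = ∑ κ, (S κ J * S κ lam / S κ Ω) * (S Ω μ * (starRingEnd ℂ) (S κ μ)) := by
      intro μ
      rw [hN, Finset.sum_mul]
      exact Finset.sum_congr rfl fun κ _ => by ring
    calc ∑ μ, N J lam μ * S Ω μ
        = ∑ μ, ∑ κ, (S κ J * S κ lam / S κ Ω) * (S Ω μ * (starRingEnd ℂ) (S κ μ)) :=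
          Finset.sum_congr rfl fun μ _ => step μ
      _ = ∑ κ, ∑ μ, (S κ J * S κ lam / S κ Ω) * (S Ω μ * (starRingEnd ℂ) (S κ μ)) :=
          Finset.sum_comm
      _ = ∑ κ, (S κ J * S κ lam / S κ Ω) * (if Ω = κ then 1 else 0) := by
          refine Finset.sum_congr rfl fun κ _ => ?_
          rw [← Finset.mul_sum, horth1 κ]
      _ = S Ω J * S Ω lam / S Ω Ω := by
          simp [mul_ite, mul_one, mul_zero, Finset.sum_ite_eq]
      _ = S Ω lam := by
          rw [← hsym J Ω, hJ]
          field_simp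
  -- column sum identity
  have hcol : ∀ mu, ∑ lam, N J lam mu * S Ω lam = S Ω mu := by
    intro mu
    have step : ∀ lam, N J lam mu * S Ω lam
        = ∑ κ, (S κ J * (starRingEnd ℂ) (S κ mu) / S κ Ω) * (S κ lam * S Ω lam) := by
      intro lam
      rw [hN, Finset.sum_mul]
      exact Finset.sum_congr rfl fun κ _ => by ring
    calc ∑ lam, N J lam mu * S Ω lam
        = ∑ lam, ∑ κ, (S κ J * (starRingEnd ℂ) (S κ mu) / S κ Ω) * (S κ lam * S Ω lam) :=
          Finset.sum_congr rfl fun lam _ => step lam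
      _ = ∑ κ, ∑ lam, (S κ J * (starRingEnd ℂ) (S κ mu) / S κ Ω) * (S κ lam * S Ω lam) :=
          Finset.sum_comm
      _ = ∑ κ, (S κ J * (starRingEnd ℂ) (S κ mu) / S κ Ω) * (if κ = Ω then 1 else 0) := by
          refine Finset.sum_congr rfl fun κ _ => ?_
          rw [← Finset.mul_sum, horth2 κ]
      _ = S Ω J * (starRingEnd ℂ) (S Ω mu) / S Ω Ω := by
          simp [mul_ite, mul_one, mul_zero, Finset.sum_ite_eq']
      _ = S Ω mu := by
          rw [← hsym J Ω, hJ, hconjΩ]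
          field_simp
  -- real versions
  have hrowR : ∀ lam, ∑ μ, (n J lam μ : ℝ) * d μ = d lam := by
    intro lam
    have h := hrow lam
    have h2 : ((∑ μ, (n J lam μ : ℝ) * d μ : ℝ) : ℂ) = ((d lam : ℝ) : ℂ) := by
      push_cast
      simp only [hd]
      rw [← hreal lam, ← h]
      refine Finset.sum_congr rfl fun μ _ => ?_
      rw [hn J lam μ, hreal μ]
      simp
    exact_mod_cast h2
  have hcolR : ∀ mu, ∑ lam, (n J lam mu : ℝ) * d lam = d mu := by
    intro mu
    have h := hcol mu
    have h2 : ((∑ lam, (n J lam mu : ℝ) * d lam : ℝ) : ℂ) = ((d mu : ℝ) : ℂ) := by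
      push_cast
      simp only [hd]
      rw [← hreal mu, ← h]
      refine Finset.sum_congr rfl fun lam _ => ?_
      rw [hn J lam mu, hreal lam]
      simp
    exact_mod_cast h2
  -- main argument
  intro lam
  have hex : ∃ mu, 1 ≤ n J lam mu := by
    by_contra h
    push_neg at h
    have hz : ∀ mu, n J lam mu = 0 := fun mu => Nat.lt_one_iff.mp (h mu)
    have := hrowR lam
    simp [hz] at this
    exact absurd this.symm (ne_of_gt (hdpos lam))
  obtain ⟨mu, hmu⟩ := hex
  have hterm_row : (n J lam mu : ℝ) * d mu ≤ d lam := by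
    rw [← hrowR lam]
    exact Finset.single_le_sum (f := fun μ => (n J lam μ : ℝ) * d μ)
      (fun i _ => mul_nonneg (Nat.cast_nonneg _) (hdpos i).le) (Finset.mem_univ mu)
  have hterm_col : (n J lam mu : ℝ) * d lam ≤ d mu := by
    rw [← hcolR mu]
    exact Finset.single_le_sum (f := fun l => (n J l mu : ℝ) * d l)
      (fun i _ => mul_nonneg (Nat.cast_nonneg _) (hdpos i).le) (Finset.mem_univ lam)
  have hmu1 : (1 : ℝ) ≤ (n J lam mu : ℝ) := by exact_mod_cast hmu
  have h1 : d mu ≤ d lam :=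
    le_trans (by nlinarith [hdpos mu]) hterm_row
  have h2 : d lam ≤ d mu :=
    le_trans (by nlinarith [hdpos lam]) hterm_col
  have heq : d lam = d mu := le_antisymm h2 h1
  have hn1 : n J lam mu = 1 := by
    have : (n J lam mu : ℝ) ≤ 1 := by
      by_contra hc
      push_neg at hc
      nlinarith [hdpos mu, hterm_row]
    have h1' : (n J lam mu : ℝ) = 1 := le_antisymm this hmu1
    exact_mod_cast h1'
  have hzero : ∀ ν, ν ≠ mu → n J lam ν = 0 := by
    intro ν hν
    have hrest : ∑ μ ∈ Finset.univ.erase mu, (n J lam μ : ℝ) * d μ = 0 := by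
      rw [Finset.sum_erase_eq_sub (Finset.mem_univ mu), hrowR lam]
      have hterm : (n J lam mu : ℝ) * d mu = d lam := by
        rw [hn1, heq]; push_cast; ring
      rw [hterm, sub_self]
    have hall := (Finset.sum_eq_zero_iff_of_nonneg
      (f := fun μ => (n J lam μ : ℝ) * d μ)
      (fun i _ => mul_nonneg (Nat.cast_nonneg _) (hdpos i).le)).mp hrest ν (Finset.mem_erase.mpr ⟨hν, Finset.mem_univ ν⟩)
    have hdν := hdpos ν
    have : (n J lam ν : ℝ) = 0 := by
      rcases mul_eq_zero.mp hall with h | h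
      · exact h
      · exact absurd h (ne_of_gt hdν)
    exact_mod_cast this
  refine ⟨mu, ⟨?_, ?_⟩, ?_⟩
  · rw [hn J lam mu, hn1]; norm_num
  · intro ν hν
    rw [hn J lam ν, hzero ν hν]; norm_num
  · intro mu' ⟨hmu'1, hmu'2⟩
    by_contra hne
    have h0 := hzero mu' (fun h => hne h)
    rw [hn J lam mu', h0] at hmu'1
    norm_num at hmu'1
end

section
/- Let G be a finite abelian group and F : G × G → U(1) an alternating bihomomorphism (i.e., F(J,J) = 1 for all J, and F is a homomorphism in each argument). Then F(J,K) = F(K,J)^{-1} for all J, K ∈ G, and the central subgroup U = {J ∈ G : F(J,K) = 1 for all K ∈ G} satisfies: the index [G : U] is a perfect square. -/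
open Function

/-- Cardinality of the character group of a finite abelian group. -/
lemma dual_card_eq {A : Type*} [CommGroup A] [Finite A] :
    Nat.card (A →* ℂˣ) = Nat.card A := by
  haveI : NeZero ((Monoid.exponent A : ℂ)) :=
    ⟨by exact_mod_cast Monoid.exponent_ne_zero_of_finite⟩
  obtain ⟨e⟩ := CommGroup.monoidHom_mulEquiv_of_hasEnoughRootsOfUnity A ℂ
  exact Nat.card_congr e.toEquiv

lemma dual_finite {A : Type*} [CommGroup A] [Finite A] : Finite (A →* ℂˣ) := by
  haveI : NeZero ((Monoid.exponent A : ℂ)) :=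
    ⟨by exact_mod_cast Monoid.exponent_ne_zero_of_finite⟩
  obtain ⟨e⟩ := CommGroup.monoidHom_mulEquiv_of_hasEnoughRootsOfUnity A ℂ
  exact Finite.of_equiv A e.symm.toEquiv

/-- A finite abelian group with a nondegenerate alternating bihomomorphism has
square cardinality. -/
lemma square_of_nondeg_alt {H : Type*} [CommGroup H] [Finite H] (B : H →* H →* ℂˣ)
    (alt : ∀ x : H, B x x = 1) (nondeg : ∀ x : H, B x = 1 → x = 1) :
    ∃ d : ℕ, Nat.card H = d * d := by
  classical
  have skew : ∀ x y : H, B x y * B y x = 1 := by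
    intro x y
    have h := alt (x * y)
    have hx := alt x
    have hy := alt y
    rw [map_mul] at h
    simp only [MonoidHom.mul_apply, map_mul] at h
    rw [hx, hy, one_mul, mul_one] at h
    -- h : B x y * (B y x) = 1  (up to assoc)
    rw [mul_comm]; exact h
  -- isotropic subgroups
  set S : Set (Subgroup H) := {L | ∀ x ∈ L, ∀ y ∈ L, (B x) y = 1} with hS
  haveI : Finite (Subgroup H) :=
    Finite.of_injective (fun (L : Subgroup H) => (L : Set H)) fun _ _ h =>
      SetLike.coe_injective h
  have hSne : S.Nonempty := ⟨⊥, by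
    intro x hx y hy
    rw [Subgroup.mem_bot] at hx hy
    subst hx; subst hy; exact alt 1⟩
  obtain ⟨L, hLS, hLmax⟩ := Set.Finite.exists_maximalFor (fun L : Subgroup H => Nat.card L)
    S (Set.toFinite S) hSne
  -- the perp of L equals L
  have hperp : ∀ z : H, (∀ l ∈ L, B z l = 1) → z ∈ L := by
    intro z hz
    by_contra hzL
    set L' : Subgroup H := L ⊔ Subgroup.zpowers z with hL'
    have hzL' : z ∈ L' := Subgroup.mem_sup_right (Subgroup.mem_zpowers z)
    have hle : L ≤ L' := le_sup_left
    have hL'S : L' ∈ S := by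
      intro x hx y hy
      rw [hL', Subgroup.mem_sup] at hx hy
      obtain ⟨a, ha, w, hw, rfl⟩ := hx
      obtain ⟨b, hb, v, hv, rfl⟩ := hy
      obtain ⟨m, rfl⟩ := hw
      obtain ⟨n, rfl⟩ := hv
      have hBza : ∀ c ∈ L, B z c = 1 := hz
      have h1 : B a b = 1 := hLS a ha b hb
      have h2 : B a (z ^ n) = 1 := by
        rw [map_zpow]
        have : B a z = 1 := by
          have := skew z a
          rw [hz a ha, one_mul] at this
          -- this : B a z = 1? no: skew z a : B z a * B a z = 1
          exact this
        rw [this, one_zpow]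
      have h3 : B (z ^ m) b = 1 := by
        have hzb : B z b = 1 := hz b hb
        rw [map_zpow]
        show (B z) b ^ m = 1
        rw [hzb, one_zpow]
      have h4 : B (z ^ m) (z ^ n) = 1 := by
        have hzz : B z z = 1 := alt z
        have e1 : B (z ^ m) = (B z) ^ m := map_zpow B z m
        rw [e1]
        show ((B z) (z ^ n)) ^ m = 1
        rw [map_zpow, hzz, one_zpow, one_zpow]
      rw [map_mul]
      simp only [MonoidHom.mul_apply, map_mul]
      rw [h1, h2, h3, h4]
      norm_num
    have hcard : Nat.card L = Nat.card L' :=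
      le_antisymm (Subgroup.card_le_of_le hle) (hLmax hL'S (Subgroup.card_le_of_le hle))
    have hsets : (L : Set H) = (L' : Set H) := by
      apply Set.eq_of_subset_of_ncard_le hle
      rw [← Nat.card_coe_set_eq, ← Nat.card_coe_set_eq]
      exact le_of_eq hcard.symm
    exact hzL (by rw [← SetLike.mem_coe, hsets]; exact hzL')
  haveI : Finite (↥L →* ℂˣ) := dual_finite
  haveI : Finite ((H ⧸ L) →* ℂˣ) := dual_finite
  -- restriction map H →* (L →* ℂˣ)
  let res : H →* (↥L →* ℂˣ) :=
    { toFun := fun x => (B x).comp L.subtype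
      map_one' := by ext l; simp
      map_mul' := by intro x y; ext l; simp }
  have hker : res.ker = L := by
    ext x
    constructor
    · intro hx
      apply hperp
      intro l hl
      have : ((B x).comp L.subtype) ⟨l, hl⟩ = 1 := by
        rw [show (B x).comp L.subtype = 1 from hx]; rfl
      simpa using this
    · intro hx
      show (B x).comp L.subtype = 1
      ext l
      simpa using hLS x hx l.1 l.2
  have hA : Nat.card (H ⧸ L) ≤ Nat.card L := by
    have hinj := QuotientGroup.kerLift_injective res
    have := Nat.card_le_card_of_injective _ hinj
    rw [hker] at this
    calc Nat.card (H ⧸ L) ≤ Nat.card (↥L →* ℂˣ) := this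
    _ = Nat.card L := dual_card_eq
  -- the map L →* ((H ⧸ L) →* ℂˣ)
  have hkill : ∀ l : L, ∀ x ∈ L, (B l.1) x = 1 := fun l x hx => hLS l.1 l.2 x hx
  have hkill' : ∀ l : L, L ≤ (B l.1).ker := fun l x hx => hkill l x hx
  let Φ : L →* ((H ⧸ L) →* ℂˣ) :=
    { toFun := fun l => QuotientGroup.lift L (B l.1) (hkill' l)
      map_one' := by
        ext x
        simp
      map_mul' := by
        intro l l'
        ext x
        simp }
  have hΦinj : Injective Φ := by
    intro l l' h
    have h2 : ∀ x : H, B l.1 x = B l'.1 x := by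
      intro x
      have := congrArg (fun f => f ((x : H) : H ⧸ L)) h
      simpa [Φ] using this
    have : B (l.1 * l'.1⁻¹) = 1 := by
      ext y
      rw [map_mul, map_inv]
      simp only [MonoidHom.mul_apply, MonoidHom.inv_apply]
      rw [h2 y]
      simp
    have := nondeg _ this
    have : l.1 = l'.1 := by
      rwa [mul_inv_eq_one] at this
    exact Subtype.ext this
  have hB : Nat.card L ≤ Nat.card (H ⧸ L) := by
    calc Nat.card L ≤ Nat.card ((H ⧸ L) →* ℂˣ) := Nat.card_le_card_of_injective _ hΦinj
    _ = Nat.card (H ⧸ L) := dual_card_eq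
  have heq : Nat.card (H ⧸ L) = Nat.card L := le_antisymm hA hB
  refine ⟨Nat.card L, ?_⟩
  rw [Subgroup.card_eq_card_quotient_mul_card_subgroup L, heq]

theorem stmt4 {G : Type*} [CommGroup G] [Finite G] (F : G → G → ℂ)
    (habs : ∀ J K : G, ‖F J K‖ = 1)
    (halt : ∀ J : G, F J J = 1)
    (hleft : ∀ J K L : G, F (J * K) L = F J L * F K L)
    (hright : ∀ J K L : G, F J (K * L) = F J K * F J L) :
    (∀ J K : G, F J K = (F K J)⁻¹) ∧
    ∃ U : Subgroup G, (∀ J : G, J ∈ U ↔ ∀ K : G, F J K = 1) ∧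
      ∃ d : ℕ, Nat.card (G ⧸ U) = d * d := by
  have hne : ∀ J K : G, F J K ≠ 0 := by
    intro J K h
    have := habs J K
    rw [h] at this
    simp at this
  have hone : ∀ J : G, F J 1 = 1 := by
    intro J
    have := hright J 1 1
    rw [mul_one] at this
    have h2 : F J 1 * 1 = F J 1 * F J 1 := by rw [mul_one]; exact this
    exact (mul_left_cancel₀ (hne J 1) h2).symm
  have honel : ∀ K : G, F 1 K = 1 := by
    intro K
    have := hleft 1 1 K
    rw [mul_one] at this
    have h2 : F 1 K * 1 = F 1 K * F 1 K := by rw [mul_one]; exact this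
    exact (mul_left_cancel₀ (hne 1 K) h2).symm
  have hskew : ∀ J K : G, F J K * F K J = 1 := by
    intro J K
    have h := halt (J * K)
    rw [hleft, hright, hright, halt J, halt K, one_mul, mul_one] at h
    exact h
  have hskew' : ∀ J K : G, F J K = (F K J)⁻¹ := fun J K =>
    eq_inv_of_mul_eq_one_left (hskew J K)
  refine ⟨hskew', ?_⟩
  -- the central subgroup
  set U : Subgroup G :=
    { carrier := {J | ∀ K, F J K = 1}
      one_mem' := honel
      mul_mem' := by
        intro a b ha hb K
        rw [hleft, ha K, hb K, one_mul]
      inv_mem' := by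
        intro a ha K
        have h := hleft a⁻¹ a K
        rw [inv_mul_cancel, honel K, ha K, mul_one] at h
        exact h.symm } with hU
  have hmemU : ∀ J : G, J ∈ U ↔ ∀ K : G, F J K = 1 := fun J => Iff.rfl
  refine ⟨U, hmemU, ?_⟩
  -- build the bihomomorphism into ℂˣ
  let inner : G → G →* ℂˣ := fun J =>
    { toFun := fun K => Units.mk0 (F J K) (hne J K)
      map_one' := Units.ext (by simp [hone J])
      map_mul' := fun K L => Units.ext (by simp [hright J K L]) }
  let B0 : G →* G →* ℂˣ :=
    { toFun := inner
      map_one' := by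
        ext K
        simpa [inner] using honel K
      map_mul' := fun J J' => by
        ext K
        simpa [inner] using hleft J J' K }
  -- descend in second argument
  have hkill2 : ∀ J : G, U ≤ (B0 J).ker := by
    intro J K hK
    have : F J K = 1 := by
      rw [hskew' J K, hK J, inv_one]
    exact Units.ext (by simpa [B0, inner] using this)
  let B1 : G → ((G ⧸ U) →* ℂˣ) := fun J => QuotientGroup.lift U (B0 J) (hkill2 J)
  let B2 : G →* ((G ⧸ U) →* ℂˣ) :=
    { toFun := B1
      map_one' := by
        ext x
        simpa [B1, B0, inner] using honel x
      map_mul' := by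
        intro J J'
        ext x
        simpa [B1, B0, inner] using hleft J J' x }
  have hkill1 : U ≤ B2.ker := by
    intro J hJ
    ext x
    simpa [B2, B1, B0, inner] using hJ x
  let B : (G ⧸ U) →* ((G ⧸ U) →* ℂˣ) := QuotientGroup.lift U B2 hkill1
  have halt' : ∀ x : G ⧸ U, B x x = 1 := by
    intro x
    induction x using QuotientGroup.induction_on with
    | H x => exact Units.ext (by simpa [B, B2, B1, B0, inner] using halt x)
  have hnd : ∀ x : G ⧸ U, B x = 1 → x = 1 := by
    intro x hx
    induction x using QuotientGroup.induction_on with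
    | H x =>
      rw [QuotientGroup.eq_one_iff]
      intro K
      have : B (↑x) (↑K) = 1 := by rw [hx]; rfl
      have h2 : Units.mk0 (F x K) (hne x K) = 1 := by
        simpa [B, B2, B1, B0, inner] using this
      have := congrArg Units.val h2
      simpa using this
  exact square_of_nondeg_alt B halt' hnd
end

section
/- Every alternating bihomomorphism F : G × G → U(1) on a finite abelian group G is the commutator cocycle of some 2-cocycle 𝓕 ∈ Z²(G, U(1)), i.e., F(a,b) = 𝓕(a,b)/𝓕(b,a). -/
open Finset

/-- Every alternating bihomomorphism `F : G × G → U(1)` on a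
finite abelian group `G` is the commutator cocycle of some 2-cocycle
`𝓕 ∈ Z²(G, U(1))`, i.e. `F a b = 𝓕 a b / 𝓕 b a`. -/
theorem stmt6 {G : Type*} [CommGroup G] [Finite G] (F : G → G → ℂ)
    (habs : ∀ a b : G, ‖F a b‖ = 1)
    (halt : ∀ a : G, F a a = 1)
    (hleft : ∀ a b c : G, F (a * b) c = F a c * F b c)
    (hright : ∀ a b c : G, F a (b * c) = F a b * F a c) :
    ∃ 𝓕 : G → G → ℂ, (∀ a b : G, ‖𝓕 a b‖ = 1) ∧
      (∀ a b c : G, 𝓕 a b * 𝓕 (a * b) c = 𝓕 a (b * c) * 𝓕 b c) ∧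
      (∀ a b : G, F a b = 𝓕 a b / 𝓕 b a) := by
  classical
  obtain ⟨ι, _, n, hn, ⟨e⟩⟩ := CommGroup.equiv_prod_multiplicative_zmod_of_finite G
  letI : LinearOrder ι := LinearOrder.lift' (Fintype.equivFin ι) (Fintype.equivFin ι).injective
  -- basic facts
  have hne : ∀ a b : G, F a b ≠ 0 := by
    intro a b h
    have := habs a b
    rw [h] at this
    simp at this
  have hF1 : ∀ b : G, F 1 b = 1 := by
    intro b
    have h := hleft 1 1 b
    rw [one_mul] at h
    exact (mul_right_cancel₀ (hne 1 b) (by rw [← h, one_mul])).symm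
  have hF1' : ∀ a : G, F a 1 = 1 := by
    intro a
    have h := hright a 1 1
    rw [one_mul] at h
    exact (mul_right_cancel₀ (hne a 1) (by rw [← h, one_mul])).symm
  have hanti : ∀ a b : G, F a b * F b a = 1 := by
    intro a b
    have h : F (a * b) (a * b) = F a b * F b a := by
      rw [hleft, hright, hright, halt, halt, one_mul, mul_one]
    rw [← h, halt]
  have hpowl : ∀ (a b : G) (m : ℕ), F (a ^ m) b = F a b ^ m := by
    intro a b m
    induction m with
    | zero => simp [hF1]
    | succ k ih => rw [pow_succ, pow_succ, hleft, ih]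
  have hpowr : ∀ (a b : G) (m : ℕ), F a (b ^ m) = F a b ^ m := by
    intro a b m
    induction m with
    | zero => simp [hF1']
    | succ k ih => rw [pow_succ, pow_succ, hright, ih]
  -- components
  set σ : ι → G → G := fun i a => e.symm (Pi.mulSingle i (e a i)) with hσ
  have hσmul : ∀ (i : ι) (a b : G), σ i (a * b) = σ i a * σ i b := by
    intro i a b
    simp only [hσ, map_mul, Pi.mul_apply, Pi.mulSingle_mul]
  have hσprod : ∀ a : G, (∏ i, σ i a) = a := by
    intro a
    apply e.injective
    rw [map_prod]
    simp only [hσ, MulEquiv.apply_symm_apply]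
    exact Finset.univ_prod_mulSingle (e a)
  have hdiag : ∀ (i : ι) (a b : G), F (σ i a) (σ i b) = 1 := by
    intro i a b
    haveI : NeZero (n i) := ⟨by have := hn i; omega⟩
    set g : G := e.symm (Pi.mulSingle i (Multiplicative.ofAdd (1 : ZMod (n i)))) with hg
    have key : ∀ x : G, σ i x = g ^ (Multiplicative.toAdd (e x i)).val := by
      intro x
      set m := (Multiplicative.toAdd (e x i)).val with hm
      have h1 : (e x i) = (Multiplicative.ofAdd (1 : ZMod (n i))) ^ m := by
        rw [← ofAdd_nsmul, nsmul_eq_mul, mul_one, hm]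
        rw [ZMod.natCast_rightInverse (Multiplicative.toAdd (e x i))]
        rfl
      show e.symm (Pi.mulSingle i (e x i)) = g ^ m
      rw [h1, Pi.mulSingle_pow, map_pow, ← hg]
    rw [key a, key b, hpowl, hpowr, halt, one_pow, one_pow]
  -- expansion of F over products
  have hFprodl : ∀ (s : Finset ι) (f : ι → G) (b : G),
      F (∏ i ∈ s, f i) b = ∏ i ∈ s, F (f i) b := by
    intro s f b
    induction s using Finset.cons_induction with
    | empty => simp [hF1]
    | cons i s hi ih => rw [Finset.prod_cons, Finset.prod_cons, hleft, ih]
  have hFprodr : ∀ (s : Finset ι) (f : ι → G) (a : G),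
      F a (∏ i ∈ s, f i) = ∏ i ∈ s, F a (f i) := by
    intro s f a
    induction s using Finset.cons_induction with
    | empty => simp [hF1']
    | cons i s hi ih => rw [Finset.prod_cons, Finset.prod_cons, hright, ih]
  -- the 2-cocycle
  set 𝓕 : G → G → ℂ := fun a b =>
    ∏ p ∈ Finset.univ.filter (fun p : ι × ι => p.1 < p.2), F (σ p.1 a) (σ p.2 b) with h𝓕
  refine ⟨𝓕, ?_, ?_, ?_⟩
  · intro a b
    rw [h𝓕]
    simp only
    rw [norm_prod]
    exact Finset.prod_eq_one fun p _ => habs _ _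
  · intro a b c
    have hL : ∀ x y z : G, 𝓕 (x * y) z = 𝓕 x z * 𝓕 y z := by
      intro x y z
      rw [h𝓕]
      simp only
      rw [← Finset.prod_mul_distrib]
      exact Finset.prod_congr rfl fun p _ => by rw [hσmul, hleft]
    have hR : ∀ x y z : G, 𝓕 x (y * z) = 𝓕 x y * 𝓕 x z := by
      intro x y z
      rw [h𝓕]
      simp only
      rw [← Finset.prod_mul_distrib]
      exact Finset.prod_congr rfl fun p _ => by rw [hσmul, hright]
    rw [hL, hR]
    ring
  · intro a b
    -- expand F a b over all pairs
    have hexp : F a b = ∏ p ∈ (Finset.univ : Finset (ι × ι)), F (σ p.1 a) (σ p.2 b) := by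
      rw [← Finset.univ_product_univ, Finset.prod_product]
      conv_lhs => rw [← hσprod a, ← hσprod b]
      rw [hFprodl]
      exact Finset.prod_congr rfl fun i _ => hFprodr _ _ _
    set f : ι × ι → ℂ := fun p => F (σ p.1 a) (σ p.2 b) with hf
    have hsplit : (Finset.univ : Finset (ι × ι)).prod f =
        (Finset.univ.filter (fun p : ι × ι => p.1 < p.2)).prod f *
        (Finset.univ.filter (fun p : ι × ι => ¬ p.1 < p.2)).prod f := by
      rw [Finset.prod_filter_mul_prod_filter_not]
    -- the non-< part reduces to the > part since the diagonal is trivial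
    have hgt : (Finset.univ.filter (fun p : ι × ι => ¬ p.1 < p.2)).prod f =
        (Finset.univ.filter (fun p : ι × ι => p.2 < p.1)).prod f := by
      symm
      apply Finset.prod_subset
      · intro p hp
        simp only [Finset.mem_filter, Finset.mem_univ, true_and] at hp ⊢
        exact lt_asymm hp
      · intro p hp hp'
        simp only [Finset.mem_filter, Finset.mem_univ, true_and] at hp hp'
        have h2 : p.1 = p.2 := le_antisymm (not_lt.mp hp') (not_lt.mp hp)
        show F (σ p.1 a) (σ p.2 b) = 1
        rw [h2, hdiag]
    -- reindex the > part via swap, and use antisymmetry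
    have hswap : (Finset.univ.filter (fun p : ι × ι => p.2 < p.1)).prod f =
        ((Finset.univ.filter (fun p : ι × ι => p.1 < p.2)).prod
          (fun p => F (σ p.1 b) (σ p.2 a)))⁻¹ := by
      rw [← Finset.prod_inv_distrib]
      apply Finset.prod_nbij' (fun p => Prod.swap p) (fun p => Prod.swap p)
      · intro p hp
        simp only [Finset.mem_filter, Finset.mem_univ, true_and] at hp ⊢
        exact hp
      · intro p hp
        simp only [Finset.mem_filter, Finset.mem_univ, true_and] at hp ⊢
        exact hp
      · intro p _; exact Prod.swap_swap p
      · intro p _; exact Prod.swap_swap p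
      · intro p hp
        show F (σ p.1 a) (σ p.2 b) = (F (σ p.swap.1 b) (σ p.swap.2 a))⁻¹
        simp only [Prod.fst_swap, Prod.snd_swap]
        exact eq_inv_of_mul_eq_one_left (hanti (σ p.1 a) (σ p.2 b))
    have h𝓕ab : 𝓕 a b = (Finset.univ.filter (fun p : ι × ι => p.1 < p.2)).prod f := rfl
    have h𝓕ba : 𝓕 b a =
        (Finset.univ.filter (fun p : ι × ι => p.1 < p.2)).prod
          (fun p => F (σ p.1 b) (σ p.2 a)) := rfl
    rw [hexp]
    rw [show (∏ p ∈ (Finset.univ : Finset (ι × ι)), F (σ p.1 a) (σ p.2 b)) =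
        (Finset.univ : Finset (ι × ι)).prod f from rfl]
    rw [hsplit, hgt, hswap, h𝓕ab, h𝓕ba, div_eq_mul_inv]
end

section
/- Let S be a unitary symmetric matrix indexed by a finite set I, σ* an involutive permutation of I with S_{σ*λ, σ*μ} = S_{λ,μ}, S⁰ a unitary matrix indexed by fixed points of σ* (rows λ) and twisted labels μ̇ (columns), and η_λ, phases. Define the orbifold S-matrix S^𝒪 by: S^𝒪_{(λ,0,0),(μ,0,0)} = S_{λ,μ} + S_{λ,σ*μ}; S^𝒪_{(λ,ψ,0),(μ,ψ',0)} = ½ S_{λ,μ}; S^𝒪_{(λ,0,0),(μ,ψ,0)} = S_{λ,μ}; S^𝒪_{(λ,0,0),(μ̇,ψ,1)} = 0; S^𝒪_{(λ,ψ,0),(μ̇,ψ',1)} = ½ ψ η_λ^{-1} S⁰_{λ,μ̇}; S^𝒪_{(λ̇,ψ,1),(μ̇,ψ',1)} = ½ ψψ' P_{λ̇,μ̇} with P unitary. If moreover S⁰ is unitary and the blocks are compatible, then S^𝒪 is unitary. -/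
open Finset

/-- Decomposition of a sum over `I` into fixed points and length-2 orbits. -/
lemma zzsum_decomp {I O : Type*} [Fintype I] [Fintype O] [DecidableEq I]
    (σ : I → I) (rep : O → I) (hσ : ∀ μ, σ (σ μ) = μ)
    (hrep : ∀ o, σ (rep o) ≠ rep o)
    (hcover : ∀ μ : I, σ μ ≠ μ → ∃! o : O, μ = rep o ∨ μ = σ (rep o))
    (h : I → ℂ) :
    ∑ κ, h κ = (∑ ν : {μ : I // σ μ = μ}, h ν.1)
      + ∑ o : O, (h (rep o) + h (σ (rep o))) := by
  classical
  have huniq : ∀ (μ : I), σ μ ≠ μ → ∀ o o' : O,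
      (μ = rep o ∨ μ = σ (rep o)) → (μ = rep o' ∨ μ = σ (rep o')) → o = o' := by
    intro μ hμ o o' h1 h2
    obtain ⟨w, _, hw⟩ := hcover μ hμ
    rw [hw o h1, hw o' h2]
  have hσrep : ∀ o : O, σ (σ (rep o)) ≠ σ (rep o) := by
    intro o hc; rw [hσ] at hc; exact hrep o hc.symm
  let e : O × Bool → {μ : I // σ μ ≠ μ} := fun x =>
    ⟨cond x.2 (rep x.1) (σ (rep x.1)), by cases hb : x.2 <;> simp [hrep x.1, hσrep x.1]⟩
  have he : Function.Bijective e := by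
    constructor
    · rintro ⟨o, b⟩ ⟨o', b'⟩ hee
      have hvv : (e (o, b)).1 = (e (o', b')).1 := by rw [hee]
      cases b <;> cases b' <;>
        simp only [e, Bool.cond_true, Bool.cond_false] at hvv ⊢
      · have := huniq (σ (rep o)) (hσrep o) o o' (Or.inr rfl) (Or.inr (by rw [hvv]))
        simp [this]
      · exfalso
        have := huniq (σ (rep o)) (hσrep o) o o' (Or.inr rfl) (Or.inl hvv)
        subst this
        exact hrep o hvv
      · exfalso
        have := huniq (rep o) (hrep o) o o' (Or.inl rfl) (Or.inr hvv)
        subst this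
        exact hrep o hvv.symm
      · have := huniq (rep o) (hrep o) o o' (Or.inl rfl) (Or.inl hvv)
        simp [this]
    · rintro ⟨μ, hμ⟩
      obtain ⟨o, ho, -⟩ := hcover μ hμ
      rcases ho with ho | ho
      · exact ⟨(o, true), by simp [e, ho]⟩
      · exact ⟨(o, false), by simp [e, ho]⟩
  have h2 : ∑ o : O, (h (rep o) + h (σ (rep o)))
      = ∑ κ : {μ : I // σ μ ≠ μ}, h κ.1 := by
    rw [← Fintype.sum_bijective e he _ (fun κ => h κ.1) (fun x => rfl)]
    rw [Fintype.sum_prod_type]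
    refine Finset.sum_congr rfl fun o _ => ?_
    rw [Fintype.sum_bool]
    simp [e]
  rw [h2]
  rw [← Finset.sum_filter_add_sum_filter_not univ (fun μ => σ μ = μ) h]
  congr 1
  · exact (Finset.sum_subtype _ (by simp) h)
  · exact (Finset.sum_subtype _ (by simp) h)

/-- Sum over orbit representatives of a σ-invariant function. -/
lemma zzsum_orb {I O : Type*} [Fintype I] [Fintype O] [DecidableEq I]
    (σ : I → I) (rep : O → I) (hσ : ∀ μ, σ (σ μ) = μ)
    (hrep : ∀ o, σ (rep o) ≠ rep o)
    (hcover : ∀ μ : I, σ μ ≠ μ → ∃! o : O, μ = rep o ∨ μ = σ (rep o))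
    (h : I → ℂ) (hinv : ∀ κ, h (σ κ) = h κ) :
    ∑ o : O, h (rep o) = (∑ κ, h κ - ∑ ν : {μ : I // σ μ = μ}, h ν.1) / 2 := by
  have hd := zzsum_decomp σ rep hσ hrep hcover h
  have h2 : ∑ o : O, (h (rep o) + h (σ (rep o))) = 2 * ∑ o : O, h (rep o) := by
    rw [Finset.mul_sum]
    exact Finset.sum_congr rfl fun o _ => by rw [hinv]; ring
  rw [h2] at hd
  linear_combination (-1/2 : ℂ) * hd



/-- The modular S-matrix `S^𝒪` of a ℤ₂-orbifold, written as a matrix on the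
label set `O ⊕ (FP × Bool) ⊕ (Tw × Bool)`, where `O` indexes length-2 orbits
(via a transversal `rep`), `FP = {μ // σ μ = μ}` are the fixed points (labels
`(μ, ψ, 0)`), and `Tw` indexes the twisted labels `(μ̇, ψ, 1)`; `ψ = ±1` is
encoded by a `Bool`. -/
noncomputable def orbifoldS {I O Tw : Type*} (S : I → I → ℂ) (σ : I → I)
    (rep : O → I) (η : {μ : I // σ μ = μ} → ℂ)
    (S0 : {μ : I // σ μ = μ} → Tw → ℂ) (P : Tw → Tw → ℂ) :
    (O ⊕ ({μ : I // σ μ = μ} × Bool) ⊕ (Tw × Bool)) →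
      (O ⊕ ({μ : I // σ μ = μ} × Bool) ⊕ (Tw × Bool)) → ℂ
  | Sum.inl o, Sum.inl o' => S (rep o) (rep o') + S (rep o) (σ (rep o'))
  | Sum.inl o, Sum.inr (Sum.inl (μ, _)) => S (rep o) μ.1
  | Sum.inl _, Sum.inr (Sum.inr _) => 0
  | Sum.inr (Sum.inl (lam, _)), Sum.inl o' => S lam.1 (rep o')
  | Sum.inr (Sum.inl (lam, _)), Sum.inr (Sum.inl (μ, _)) => (1 / 2) * S lam.1 μ.1
  | Sum.inr (Sum.inl (lam, ψ)), Sum.inr (Sum.inr (t, _)) =>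
      (1 / 2) * (if ψ then 1 else -1) * (η lam)⁻¹ * S0 lam t
  | Sum.inr (Sum.inr _), Sum.inl _ => 0
  | Sum.inr (Sum.inr (t, _)), Sum.inr (Sum.inl (μ, ψ')) =>
      (1 / 2) * (if ψ' then 1 else -1) * (η μ)⁻¹ * S0 μ t
  | Sum.inr (Sum.inr (t, ψ)), Sum.inr (Sum.inr (t', ψ')) =>
      (1 / 2) * (if ψ then 1 else -1) * (if ψ' then 1 else -1) * P t t'

/-- Given a unitary symmetric S-matrix `S` on `I`, invariant
under an involution `σ*` in the sense `S (σ λ) μ = S λ (σ μ)`, a transversal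
`rep` of the length-2 orbits, unimodular phases `η`, a unitary matrix `S0`
(rows: fixed points, columns: twisted labels) and a unitary matrix `P` on
twisted labels, the block matrix `S^𝒪` defined by the orbifold formulas is
unitary. -/
theorem stmt13 {I O Tw : Type*} [Fintype I] [Fintype O] [Fintype Tw]
    [DecidableEq I] [DecidableEq O] [DecidableEq Tw]
    (S : I → I → ℂ) (σ : I → I) (hσ : ∀ μ, σ (σ μ) = μ)
    (hSunit : ∀ lam mu : I,
      ∑ κ, S lam κ * (starRingEnd ℂ) (S mu κ) = if lam = mu then 1 else 0)
    (hSsym : ∀ lam mu : I, S lam mu = S mu lam)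
    (hSσ : ∀ lam mu : I, S (σ lam) mu = S lam (σ mu))
    (rep : O → I) (hrep : ∀ o, σ (rep o) ≠ rep o)
    (hcover : ∀ μ : I, σ μ ≠ μ → ∃! o : O, μ = rep o ∨ μ = σ (rep o))
    (η : {μ : I // σ μ = μ} → ℂ) (hη : ∀ lam, ‖η lam‖ = 1)
    (S0 : {μ : I // σ μ = μ} → Tw → ℂ)
    (hS0row : ∀ lam mu : {μ : I // σ μ = μ},
      ∑ t, S0 lam t * (starRingEnd ℂ) (S0 mu t) = if lam = mu then 1 else 0)
    (hS0col : ∀ t t' : Tw,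
      ∑ lam, S0 lam t * (starRingEnd ℂ) (S0 lam t') = if t = t' then 1 else 0)
    (P : Tw → Tw → ℂ)
    (hProw : ∀ t t' : Tw,
      ∑ u, P t u * (starRingEnd ℂ) (P t' u) = if t = t' then 1 else 0)
    (hPcol : ∀ t t' : Tw,
      ∑ u, P u t * (starRingEnd ℂ) (P u t') = if t = t' then 1 else 0) :
    ∀ a b : O ⊕ ({μ : I // σ μ = μ} × Bool) ⊕ (Tw × Bool),
      ∑ c, orbifoldS S σ rep η S0 P a c *
          (starRingEnd ℂ) (orbifoldS S σ rep η S0 P b c) =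
        if a = b then 1 else 0 := by
  classical
  have hconjsign : ∀ b : Bool,
      (starRingEnd ℂ) (if b = true then (1:ℂ) else -1) = if b = true then 1 else -1 := by
    intro b; cases b <;> simp
  have hη1 : ∀ l, (η l)⁻¹ * ((starRingEnd ℂ) (η l))⁻¹ = 1 := by
    intro l
    have h0 : η l * (starRingEnd ℂ) (η l) = 1 := by
      rw [Complex.mul_conj, Complex.normSq_eq_norm_sq, hη l]; norm_num
    rw [← mul_inv, h0, inv_one]
  have huniq : ∀ (μ : I), σ μ ≠ μ → ∀ o o' : O,
      (μ = rep o ∨ μ = σ (rep o)) → (μ = rep o' ∨ μ = σ (rep o')) → o = o' := by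
    intro μ hμ o o' h1 h2
    obtain ⟨w, _, hw⟩ := hcover μ hμ
    rw [hw o h1, hw o' h2]
  have hrepinj : ∀ o o' : O, rep o = rep o' → o = o' := by
    intro o o' h
    exact huniq (rep o) (hrep o) o o' (Or.inl rfl) (Or.inl h)
  have hrepσ : ∀ o o' : O, rep o ≠ σ (rep o') := by
    intro o o' h
    have := huniq (rep o) (hrep o) o o' (Or.inl rfl) (Or.inr h)
    subst this
    exact hrep o h.symm
  have hfp1 : ∀ (ν : {μ : I // σ μ = μ}) (o : O), rep o ≠ ν.1 := by
    intro ν o h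
    exact hrep o (by rw [h]; exact ν.2)
  have hfp2 : ∀ (ν : {μ : I // σ μ = μ}) (o : O), σ (rep o) ≠ ν.1 := by
    intro ν o h
    have : rep o = ν.1 := by rw [← hσ (rep o), h, ν.2]
    exact hfp1 ν o this
  have hfix : ∀ (ν : {μ : I // σ μ = μ}) (κ : I), S ν.1 (σ κ) = S ν.1 κ := by
    intro ν κ; rw [← hSσ, ν.2]
  have hSunit2 : ∀ x y : I, ∑ κ, S x (σ κ) * (starRingEnd ℂ) (S y κ)
      = if σ x = y then 1 else 0 := by
    intro x y; simp_rw [← hSσ]; exact hSunit (σ x) y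
  have hSunit3 : ∀ x y : I, ∑ κ, S x κ * (starRingEnd ℂ) (S y (σ κ))
      = if x = σ y then 1 else 0 := by
    intro x y; simp_rw [← hSσ]; exact hSunit x (σ y)
  have hSunit4 : ∀ x y : I, ∑ κ, S x (σ κ) * (starRingEnd ℂ) (S y (σ κ))
      = if x = y then 1 else 0 := by
    intro x y; simp_rw [← hSσ]; rw [hSunit (σ x) (σ y)]
    exact if_congr ⟨fun h => by rw [← hσ x, h, hσ], fun h => by rw [h]⟩ rfl rfl
  rintro (o | ⟨lam, ψ⟩ | ⟨t, χ⟩) (o' | ⟨mu, ψ'⟩ | ⟨u, χ'⟩)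
  -- Case 1 : (inl o, inl o')
  · rw [Fintype.sum_sum_type, Fintype.sum_sum_type]
    set h₁ : I → ℂ := fun κ => (S (rep o) κ + S (rep o) (σ κ)) *
        ((starRingEnd ℂ) (S (rep o') κ) + (starRingEnd ℂ) (S (rep o') (σ κ))) with hh₁
    have hinv : ∀ κ, h₁ (σ κ) = h₁ κ := by
      intro κ; simp only [hh₁]; rw [hσ]; ring
    have hO : (∑ x : O, orbifoldS S σ rep η S0 P (Sum.inl o) (Sum.inl x) *
        (starRingEnd ℂ) (orbifoldS S σ rep η S0 P (Sum.inl o') (Sum.inl x)))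
        = ∑ x : O, h₁ (rep x) :=
      Finset.sum_congr rfl fun x _ => by simp only [orbifoldS, hh₁, map_add]
    have hFP : (∑ x : {μ : I // σ μ = μ} × Bool,
        orbifoldS S σ rep η S0 P (Sum.inl o) (Sum.inr (Sum.inl x)) *
        (starRingEnd ℂ) (orbifoldS S σ rep η S0 P (Sum.inl o') (Sum.inr (Sum.inl x))))
        = ∑ ν : {μ : I // σ μ = μ}, 2 * (S (rep o) ν.1 * (starRingEnd ℂ) (S (rep o') ν.1)) := by
      rw [Fintype.sum_prod_type]
      refine Finset.sum_congr rfl fun ν _ => ?_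
      rw [Fintype.sum_bool]
      simp only [orbifoldS]; ring
    have hTw : (∑ x : Tw × Bool,
        orbifoldS S σ rep η S0 P (Sum.inl o) (Sum.inr (Sum.inr x)) *
        (starRingEnd ℂ) (orbifoldS S σ rep η S0 P (Sum.inl o') (Sum.inr (Sum.inr x)))) = 0 :=
      Finset.sum_eq_zero fun x _ => by simp [orbifoldS]
    rw [hO, hFP, hTw]
    rw [zzsum_orb σ rep hσ hrep hcover h₁ hinv]
    have hK : ∑ κ, h₁ κ = 2 * (if rep o = rep o' then 1 else 0) := by
      have hexp : ∀ κ, h₁ κ = S (rep o) κ * (starRingEnd ℂ) (S (rep o') κ)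
          + S (rep o) κ * (starRingEnd ℂ) (S (rep o') (σ κ))
          + S (rep o) (σ κ) * (starRingEnd ℂ) (S (rep o') κ)
          + S (rep o) (σ κ) * (starRingEnd ℂ) (S (rep o') (σ κ)) := by
        intro κ; simp only [hh₁]; ring
      rw [Finset.sum_congr rfl fun κ _ => hexp κ]
      rw [Finset.sum_add_distrib, Finset.sum_add_distrib, Finset.sum_add_distrib]
      rw [hSunit, hSunit2, hSunit3, hSunit4]
      rw [if_neg (hrepσ o o'), if_neg (fun h : σ (rep o) = rep o' => hrepσ o' o h.symm)]
      ring
    have hF : ∑ ν : {μ : I // σ μ = μ}, h₁ ν.1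
        = 2 * ∑ ν : {μ : I // σ μ = μ}, 2 * (S (rep o) ν.1 * (starRingEnd ℂ) (S (rep o') ν.1)) := by
      rw [Finset.mul_sum]
      refine Finset.sum_congr rfl fun ν _ => ?_
      simp only [hh₁]; rw [ν.2]; ring
    have hRHS : (if (Sum.inl o : O ⊕ ({μ : I // σ μ = μ} × Bool) ⊕ (Tw × Bool)) = Sum.inl o'
        then (1:ℂ) else 0) = if rep o = rep o' then 1 else 0 := by
      by_cases h : o = o'
      · simp [h]
      · rw [if_neg (by simp [h]), if_neg (fun hc => h (hrepinj o o' hc))]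
    rw [hRHS]
    linear_combination hK / 2 - hF / 2
  · rw [Fintype.sum_sum_type, Fintype.sum_sum_type]
    set h₂ : I → ℂ := fun κ => (S (rep o) κ + S (rep o) (σ κ)) *
        (starRingEnd ℂ) (S mu.1 κ) with hh₂
    have hinv : ∀ κ, h₂ (σ κ) = h₂ κ := by
      intro κ; simp only [hh₂]; rw [hσ, hfix mu κ]; ring
    have hO : (∑ x : O, orbifoldS S σ rep η S0 P (Sum.inl o) (Sum.inl x) *
        (starRingEnd ℂ) (orbifoldS S σ rep η S0 P (Sum.inr (Sum.inl (mu, ψ'))) (Sum.inl x)))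
        = ∑ x : O, h₂ (rep x) :=
      Finset.sum_congr rfl fun x _ => by simp only [orbifoldS, hh₂]
    have hFP : (∑ x : {μ : I // σ μ = μ} × Bool,
        orbifoldS S σ rep η S0 P (Sum.inl o) (Sum.inr (Sum.inl x)) *
        (starRingEnd ℂ) (orbifoldS S σ rep η S0 P (Sum.inr (Sum.inl (mu, ψ'))) (Sum.inr (Sum.inl x))))
        = ∑ ν : {μ : I // σ μ = μ}, S (rep o) ν.1 * (starRingEnd ℂ) (S mu.1 ν.1) := by
      rw [Fintype.sum_prod_type]
      refine Finset.sum_congr rfl fun ν _ => ?_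
      rw [Fintype.sum_bool]
      simp only [orbifoldS, map_mul, map_div₀, map_one, map_ofNat]; ring
    have hTw : (∑ x : Tw × Bool,
        orbifoldS S σ rep η S0 P (Sum.inl o) (Sum.inr (Sum.inr x)) *
        (starRingEnd ℂ) (orbifoldS S σ rep η S0 P (Sum.inr (Sum.inl (mu, ψ'))) (Sum.inr (Sum.inr x)))) = 0 :=
      Finset.sum_eq_zero fun x _ => by simp [orbifoldS]
    rw [hO, hFP, hTw]
    rw [zzsum_orb σ rep hσ hrep hcover h₂ hinv]
    have hK : ∑ κ, h₂ κ = 0 := by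
      have hexp : ∀ κ, h₂ κ = S (rep o) κ * (starRingEnd ℂ) (S mu.1 κ)
          + S (rep o) (σ κ) * (starRingEnd ℂ) (S mu.1 κ) := by
        intro κ; simp only [hh₂]; ring
      rw [Finset.sum_congr rfl fun κ _ => hexp κ, Finset.sum_add_distrib,
        hSunit, hSunit2, if_neg (hfp1 mu o), if_neg (hfp2 mu o)]
      ring
    have hF : ∑ ν : {μ : I // σ μ = μ}, h₂ ν.1
        = 2 * ∑ ν : {μ : I // σ μ = μ}, S (rep o) ν.1 * (starRingEnd ℂ) (S mu.1 ν.1) := by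
      rw [Finset.mul_sum]
      refine Finset.sum_congr rfl fun ν _ => ?_
      simp only [hh₂]; rw [ν.2]; ring
    rw [if_neg (by simp)]
    linear_combination hK / 2 - hF / 2
  · rw [if_neg (by simp), Fintype.sum_sum_type, Fintype.sum_sum_type]
    have hO : (∑ x : O, orbifoldS S σ rep η S0 P (Sum.inl o) (Sum.inl x) *
        (starRingEnd ℂ) (orbifoldS S σ rep η S0 P (Sum.inr (Sum.inr (u, χ'))) (Sum.inl x))) = 0 :=
      Finset.sum_eq_zero fun x _ => by simp [orbifoldS]
    have hFP : (∑ x : {μ : I // σ μ = μ} × Bool,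
        orbifoldS S σ rep η S0 P (Sum.inl o) (Sum.inr (Sum.inl x)) *
        (starRingEnd ℂ) (orbifoldS S σ rep η S0 P (Sum.inr (Sum.inr (u, χ'))) (Sum.inr (Sum.inl x)))) = 0 := by
      rw [Fintype.sum_prod_type]
      refine Finset.sum_eq_zero fun ν _ => ?_
      rw [Fintype.sum_bool]
      simp only [orbifoldS, map_mul, map_div₀, map_one, map_ofNat, map_neg, map_inv₀,
        hconjsign, if_true, if_false, Bool.false_eq_true]
      ring
    have hTw : (∑ x : Tw × Bool,
        orbifoldS S σ rep η S0 P (Sum.inl o) (Sum.inr (Sum.inr x)) *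
        (starRingEnd ℂ) (orbifoldS S σ rep η S0 P (Sum.inr (Sum.inr (u, χ'))) (Sum.inr (Sum.inr x)))) = 0 :=
      Finset.sum_eq_zero fun x _ => by simp [orbifoldS]
    rw [hO, hFP, hTw]
    norm_num
  · rw [Fintype.sum_sum_type, Fintype.sum_sum_type]
    set h₄ : I → ℂ := fun κ => S lam.1 κ *
        ((starRingEnd ℂ) (S (rep o') κ) + (starRingEnd ℂ) (S (rep o') (σ κ))) with hh₄
    have hinv : ∀ κ, h₄ (σ κ) = h₄ κ := by
      intro κ; simp only [hh₄]; rw [hσ, hfix lam κ]; ring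
    have hO : (∑ x : O, orbifoldS S σ rep η S0 P (Sum.inr (Sum.inl (lam, ψ))) (Sum.inl x) *
        (starRingEnd ℂ) (orbifoldS S σ rep η S0 P (Sum.inl o') (Sum.inl x)))
        = ∑ x : O, h₄ (rep x) :=
      Finset.sum_congr rfl fun x _ => by simp only [orbifoldS, hh₄, map_add]
    have hFP : (∑ x : {μ : I // σ μ = μ} × Bool,
        orbifoldS S σ rep η S0 P (Sum.inr (Sum.inl (lam, ψ))) (Sum.inr (Sum.inl x)) *
        (starRingEnd ℂ) (orbifoldS S σ rep η S0 P (Sum.inl o') (Sum.inr (Sum.inl x))))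
        = ∑ ν : {μ : I // σ μ = μ}, S lam.1 ν.1 * (starRingEnd ℂ) (S (rep o') ν.1) := by
      rw [Fintype.sum_prod_type]
      refine Finset.sum_congr rfl fun ν _ => ?_
      rw [Fintype.sum_bool]
      simp only [orbifoldS]; ring
    have hTw : (∑ x : Tw × Bool,
        orbifoldS S σ rep η S0 P (Sum.inr (Sum.inl (lam, ψ))) (Sum.inr (Sum.inr x)) *
        (starRingEnd ℂ) (orbifoldS S σ rep η S0 P (Sum.inl o') (Sum.inr (Sum.inr x)))) = 0 :=
      Finset.sum_eq_zero fun x _ => by simp [orbifoldS]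
    rw [hO, hFP, hTw]
    rw [zzsum_orb σ rep hσ hrep hcover h₄ hinv]
    have hK : ∑ κ, h₄ κ = 0 := by
      have hexp : ∀ κ, h₄ κ = S lam.1 κ * (starRingEnd ℂ) (S (rep o') κ)
          + S lam.1 κ * (starRingEnd ℂ) (S (rep o') (σ κ)) := by
        intro κ; simp only [hh₄]; ring
      rw [Finset.sum_congr rfl fun κ _ => hexp κ, Finset.sum_add_distrib,
        hSunit, hSunit3, if_neg (fun h : lam.1 = rep o' => hfp1 lam o' h.symm),
        if_neg (fun h : lam.1 = σ (rep o') => hfp2 lam o' h.symm)]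
      ring
    have hF : ∑ ν : {μ : I // σ μ = μ}, h₄ ν.1
        = 2 * ∑ ν : {μ : I // σ μ = μ}, S lam.1 ν.1 * (starRingEnd ℂ) (S (rep o') ν.1) := by
      rw [Finset.mul_sum]
      refine Finset.sum_congr rfl fun ν _ => ?_
      simp only [hh₄]; rw [ν.2]; ring
    rw [if_neg (by simp)]
    linear_combination hK / 2 - hF / 2
  · rw [Fintype.sum_sum_type, Fintype.sum_sum_type]
    set h₅ : I → ℂ := fun κ => S lam.1 κ * (starRingEnd ℂ) (S mu.1 κ) with hh₅
    have hinv : ∀ κ, h₅ (σ κ) = h₅ κ := by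
      intro κ; simp only [hh₅]; rw [hfix lam κ, hfix mu κ]
    have hO : (∑ x : O, orbifoldS S σ rep η S0 P (Sum.inr (Sum.inl (lam, ψ))) (Sum.inl x) *
        (starRingEnd ℂ) (orbifoldS S σ rep η S0 P (Sum.inr (Sum.inl (mu, ψ'))) (Sum.inl x)))
        = ∑ x : O, h₅ (rep x) :=
      Finset.sum_congr rfl fun x _ => by simp only [orbifoldS, hh₅]
    have hFP : (∑ x : {μ : I // σ μ = μ} × Bool,
        orbifoldS S σ rep η S0 P (Sum.inr (Sum.inl (lam, ψ))) (Sum.inr (Sum.inl x)) *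
        (starRingEnd ℂ) (orbifoldS S σ rep η S0 P (Sum.inr (Sum.inl (mu, ψ'))) (Sum.inr (Sum.inl x))))
        = ∑ ν : {μ : I // σ μ = μ}, (1/2) * (S lam.1 ν.1 * (starRingEnd ℂ) (S mu.1 ν.1)) := by
      rw [Fintype.sum_prod_type]
      refine Finset.sum_congr rfl fun ν _ => ?_
      rw [Fintype.sum_bool]
      simp only [orbifoldS, map_mul, map_div₀, map_one, map_ofNat]; ring
    have hTw : (∑ x : Tw × Bool,
        orbifoldS S σ rep η S0 P (Sum.inr (Sum.inl (lam, ψ))) (Sum.inr (Sum.inr x)) *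
        (starRingEnd ℂ) (orbifoldS S σ rep η S0 P (Sum.inr (Sum.inl (mu, ψ'))) (Sum.inr (Sum.inr x))))
        = ((1/2) * ((if ψ = true then (1:ℂ) else -1) * (if ψ' = true then (1:ℂ) else -1)) *
            ((η lam)⁻¹ * ((starRingEnd ℂ) (η mu))⁻¹)) * (if lam = mu then 1 else 0) := by
      rw [← hS0row lam mu, Finset.mul_sum, Fintype.sum_prod_type]
      refine Finset.sum_congr rfl fun x _ => ?_
      rw [Fintype.sum_bool]
      simp only [orbifoldS, map_mul, map_div₀, map_one, map_ofNat, map_neg, map_inv₀, hconjsign]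
      ring
    rw [hO, hFP, hTw]
    rw [zzsum_orb σ rep hσ hrep hcover h₅ hinv]
    have hK := hSunit lam.1 mu.1
    have hF : ∑ ν : {μ : I // σ μ = μ}, h₅ ν.1
        = 2 * ∑ ν : {μ : I // σ μ = μ}, (1/2) * (S lam.1 ν.1 * (starRingEnd ℂ) (S mu.1 ν.1)) := by
      rw [Finset.mul_sum]
      refine Finset.sum_congr rfl fun ν _ => ?_
      simp only [hh₅]; ring
    by_cases hlm : lam = mu
    · subst hlm
      rw [if_pos rfl] at hK
      rw [if_pos rfl, mul_one]
      have hRHS : (if (Sum.inr (Sum.inl (lam, ψ)) : O ⊕ ({μ : I // σ μ = μ} × Bool) ⊕ (Tw × Bool))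
          = Sum.inr (Sum.inl (lam, ψ')) then (1:ℂ) else 0) = if ψ = ψ' then 1 else 0 :=
        if_congr (by simp) rfl rfl
      rw [hRHS]
      have key : (1:ℂ)/2 + (1/2) * ((if ψ = true then (1:ℂ) else -1) * (if ψ' = true then (1:ℂ) else -1))
          = if ψ = ψ' then 1 else 0 := by
        cases ψ <;> cases ψ' <;> norm_num
      linear_combination hK/2 - hF/2 +
        ((1/2) * ((if ψ = true then (1:ℂ) else -1) * (if ψ' = true then (1:ℂ) else -1))) * hη1 lam + key
    · rw [if_neg (fun h : lam.1 = mu.1 => hlm (Subtype.ext h))] at hK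
      rw [if_neg hlm, mul_zero, if_neg (by simp [hlm])]
      linear_combination hK/2 - hF/2
  · rw [if_neg (by simp), Fintype.sum_sum_type, Fintype.sum_sum_type]
    have hO : (∑ x : O, orbifoldS S σ rep η S0 P (Sum.inr (Sum.inl (lam, ψ))) (Sum.inl x) *
        (starRingEnd ℂ) (orbifoldS S σ rep η S0 P (Sum.inr (Sum.inr (u, χ'))) (Sum.inl x))) = 0 :=
      Finset.sum_eq_zero fun x _ => by simp [orbifoldS]
    have hFP : (∑ x : {μ : I // σ μ = μ} × Bool,
        orbifoldS S σ rep η S0 P (Sum.inr (Sum.inl (lam, ψ))) (Sum.inr (Sum.inl x)) *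
        (starRingEnd ℂ) (orbifoldS S σ rep η S0 P (Sum.inr (Sum.inr (u, χ'))) (Sum.inr (Sum.inl x)))) = 0 := by
      rw [Fintype.sum_prod_type]
      refine Finset.sum_eq_zero fun ν _ => ?_
      rw [Fintype.sum_bool]
      simp only [orbifoldS, map_mul, map_div₀, map_one, map_ofNat, map_neg, map_inv₀,
        hconjsign, if_true, if_false, Bool.false_eq_true]
      ring
    have hTw : (∑ x : Tw × Bool,
        orbifoldS S σ rep η S0 P (Sum.inr (Sum.inl (lam, ψ))) (Sum.inr (Sum.inr x)) *
        (starRingEnd ℂ) (orbifoldS S σ rep η S0 P (Sum.inr (Sum.inr (u, χ'))) (Sum.inr (Sum.inr x)))) = 0 := by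
      rw [Fintype.sum_prod_type]
      refine Finset.sum_eq_zero fun x _ => ?_
      rw [Fintype.sum_bool]
      simp only [orbifoldS, map_mul, map_div₀, map_one, map_ofNat, map_neg, map_inv₀,
        hconjsign, if_true, if_false, Bool.false_eq_true]
      ring
    rw [hO, hFP, hTw]
    norm_num
  · rw [if_neg (by simp), Fintype.sum_sum_type, Fintype.sum_sum_type]
    have hO : (∑ x : O, orbifoldS S σ rep η S0 P (Sum.inr (Sum.inr (t, χ))) (Sum.inl x) *
        (starRingEnd ℂ) (orbifoldS S σ rep η S0 P (Sum.inl o') (Sum.inl x))) = 0 :=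
      Finset.sum_eq_zero fun x _ => by simp [orbifoldS]
    have hFP : (∑ x : {μ : I // σ μ = μ} × Bool,
        orbifoldS S σ rep η S0 P (Sum.inr (Sum.inr (t, χ))) (Sum.inr (Sum.inl x)) *
        (starRingEnd ℂ) (orbifoldS S σ rep η S0 P (Sum.inl o') (Sum.inr (Sum.inl x)))) = 0 := by
      rw [Fintype.sum_prod_type]
      refine Finset.sum_eq_zero fun ν _ => ?_
      rw [Fintype.sum_bool]
      simp only [orbifoldS, map_mul, map_div₀, map_one, map_ofNat, map_neg, map_inv₀,
        hconjsign, if_true, if_false, Bool.false_eq_true]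
      ring
    have hTw : (∑ x : Tw × Bool,
        orbifoldS S σ rep η S0 P (Sum.inr (Sum.inr (t, χ))) (Sum.inr (Sum.inr x)) *
        (starRingEnd ℂ) (orbifoldS S σ rep η S0 P (Sum.inl o') (Sum.inr (Sum.inr x)))) = 0 :=
      Finset.sum_eq_zero fun x _ => by simp [orbifoldS]
    rw [hO, hFP, hTw]
    norm_num
  · rw [if_neg (by simp), Fintype.sum_sum_type, Fintype.sum_sum_type]
    have hO : (∑ x : O, orbifoldS S σ rep η S0 P (Sum.inr (Sum.inr (t, χ))) (Sum.inl x) *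
        (starRingEnd ℂ) (orbifoldS S σ rep η S0 P (Sum.inr (Sum.inl (mu, ψ'))) (Sum.inl x))) = 0 :=
      Finset.sum_eq_zero fun x _ => by simp [orbifoldS]
    have hFP : (∑ x : {μ : I // σ μ = μ} × Bool,
        orbifoldS S σ rep η S0 P (Sum.inr (Sum.inr (t, χ))) (Sum.inr (Sum.inl x)) *
        (starRingEnd ℂ) (orbifoldS S σ rep η S0 P (Sum.inr (Sum.inl (mu, ψ'))) (Sum.inr (Sum.inl x)))) = 0 := by
      rw [Fintype.sum_prod_type]
      refine Finset.sum_eq_zero fun ν _ => ?_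
      rw [Fintype.sum_bool]
      simp only [orbifoldS, map_mul, map_div₀, map_one, map_ofNat, map_neg, map_inv₀,
        hconjsign, if_true, if_false, Bool.false_eq_true]
      ring
    have hTw : (∑ x : Tw × Bool,
        orbifoldS S σ rep η S0 P (Sum.inr (Sum.inr (t, χ))) (Sum.inr (Sum.inr x)) *
        (starRingEnd ℂ) (orbifoldS S σ rep η S0 P (Sum.inr (Sum.inl (mu, ψ'))) (Sum.inr (Sum.inr x)))) = 0 := by
      rw [Fintype.sum_prod_type]
      refine Finset.sum_eq_zero fun x _ => ?_
      rw [Fintype.sum_bool]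
      simp only [orbifoldS, map_mul, map_div₀, map_one, map_ofNat, map_neg, map_inv₀,
        hconjsign, if_true, if_false, Bool.false_eq_true]
      ring
    rw [hO, hFP, hTw]
    norm_num
  · rw [Fintype.sum_sum_type, Fintype.sum_sum_type]
    have hO : (∑ x : O, orbifoldS S σ rep η S0 P (Sum.inr (Sum.inr (t, χ))) (Sum.inl x) *
        (starRingEnd ℂ) (orbifoldS S σ rep η S0 P (Sum.inr (Sum.inr (u, χ'))) (Sum.inl x))) = 0 :=
      Finset.sum_eq_zero fun x _ => by simp [orbifoldS]
    have hFP : (∑ x : {μ : I // σ μ = μ} × Bool,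
        orbifoldS S σ rep η S0 P (Sum.inr (Sum.inr (t, χ))) (Sum.inr (Sum.inl x)) *
        (starRingEnd ℂ) (orbifoldS S σ rep η S0 P (Sum.inr (Sum.inr (u, χ'))) (Sum.inr (Sum.inl x))))
        = (1/2) * (if t = u then 1 else 0) := by
      rw [← hS0col t u, Finset.mul_sum, Fintype.sum_prod_type]
      refine Finset.sum_congr rfl fun ν _ => ?_
      rw [Fintype.sum_bool]
      simp only [orbifoldS, map_mul, map_div₀, map_one, map_ofNat, map_neg, map_inv₀,
        hconjsign, if_true, if_false, Bool.false_eq_true]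
      linear_combination ((S0 ν t * (starRingEnd ℂ) (S0 ν u)) / 2) * hη1 ν
    have hTw : (∑ x : Tw × Bool,
        orbifoldS S σ rep η S0 P (Sum.inr (Sum.inr (t, χ))) (Sum.inr (Sum.inr x)) *
        (starRingEnd ℂ) (orbifoldS S σ rep η S0 P (Sum.inr (Sum.inr (u, χ'))) (Sum.inr (Sum.inr x))))
        = ((1/2) * ((if χ = true then (1:ℂ) else -1) * (if χ' = true then (1:ℂ) else -1))) *
            (if t = u then 1 else 0) := by
      rw [← hProw t u, Finset.mul_sum, Fintype.sum_prod_type]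
      refine Finset.sum_congr rfl fun x _ => ?_
      rw [Fintype.sum_bool]
      simp only [orbifoldS, map_mul, map_div₀, map_one, map_ofNat, map_neg, map_inv₀,
        hconjsign, if_true, if_false, Bool.false_eq_true]
      ring
    rw [hO, hFP, hTw]
    by_cases htu : t = u
    · subst htu
      rw [if_pos rfl]
      have hRHS : (if (Sum.inr (Sum.inr (t, χ)) : O ⊕ ({μ : I // σ μ = μ} × Bool) ⊕ (Tw × Bool))
          = Sum.inr (Sum.inr (t, χ')) then (1:ℂ) else 0) = if χ = χ' then 1 else 0 :=
        if_congr (by simp) rfl rfl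
      rw [hRHS]
      cases χ <;> cases χ' <;> norm_num
    · have hne : ¬ ((Sum.inr (Sum.inr (t, χ)) : O ⊕ ({μ : I // σ μ = μ} × Bool) ⊕ (Tw × Bool))
          = Sum.inr (Sum.inr (u, χ'))) := by
        intro hc
        simp only [Sum.inr.injEq, Prod.mk.injEq] at hc
        exact htu hc.1
      rw [if_neg htu, if_neg hne]
      ring
end

section
/- Let Ŝ be the matrix with entries Ŝ_{(μ̄,ψ_μ̄),[ρ̄,ψ_ρ̄]} = (|G| / (|S_μ̄||U_μ̄||S_ρ̄||U_ρ̄|)^{1/2}) ∑_{J ∈ S_μ̄ ∩ U_ρ̄} ψ_μ̄(J) \overline{ψ_ρ̄(J)} S^J_{μ̄,ρ̄}. Assume each S^J is unitary on its index set, the orbit/stabilizer structure is as in the simple current formalism, and character orthogonality holds. Then the boundary structure constants Ñ_{λ̂μ̂}^{ν̂} = ∑_a Ŝ_{λ̂,a} Ŝ_{μ̂,a} Ŝ_{ν̂,a} / Ŝ_{Ω̂,a} (indices raised with the inverse of Ĉ_{λ̂,μ̂} = Ñ_{λ̂μ̂}^{Ω̂}) define a commutative associative multiplication on the free module spanned by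 the labels λ̂, with unit Ω̂. -/
/-- The classifying-algebra structure constants built from the
diagonalizing matrix `Ŝ` of the simple current formalism. Labels `λ̂ ∈ Λ`
carry an orbifold sector label `barΛ λ̂` and a character `chΛ λ̂` of its full
stabilizer; boundary labels `a ∈ A` carry an orbifold sector label `barA a`
and a character `chA a` of its central stabilizer, and
`Ŝ_{λ̂,a} = (|G|/√(|S_λ̄||U_λ̄||S_ρ̄||U_ρ̄|)) ∑_{J ∈ S_λ̄ ∩ U_ρ̄}
chΛ(J) conj(chA(J)) S^J_{λ̄,ρ̄}`.
Assuming `Ŝ` is invertible (as follows from unitarity of the `S^J` and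
character orthogonality) with `Ŝ_{Ω̂,a} ≠ 0`, the structure constants
`Ñ_{λ̂μ̂}^{ν̂} = ∑_ρ̂ (∑_a Ŝ_{λ̂a}Ŝ_{μ̂a}Ŝ_{ρ̂a}/Ŝ_{Ω̂a}) (Ĉ⁻¹)_{ρ̂ν̂}`
(indices raised with the inverse of `Ĉ_{λ̂μ̂} = Ñ_{λ̂μ̂Ω̂}`) define a
commutative associative multiplication with unit `Ω̂`. -/
theorem stmt17 {G B Λ A : Type*} [CommGroup G] [Fintype G] [DecidableEq G]
    [Fintype B] [Fintype Λ] [Fintype A] [DecidableEq Λ] [DecidableEq A]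
    (Sg Ug : B → Subgroup G)
    [∀ b, DecidablePred (· ∈ Sg b)] [∀ b, DecidablePred (· ∈ Ug b)]
    (hUS : ∀ b : B, Ug b ≤ Sg b)
    (barΛ : Λ → B) (chΛ : Λ → G → ℂ) (barA : A → B) (chA : A → G → ℂ)
    (SJ : G → B → B → ℂ)
    (Shat : Λ → A → ℂ)
    (hShat : ∀ (l : Λ) (a : A), Shat l a =
      ((Nat.card G : ℂ) /
        ((Real.sqrt ((Nat.card (Sg (barΛ l)) * Nat.card (Ug (barΛ l)) *
          Nat.card (Sg (barA a)) * Nat.card (Ug (barA a)) : ℕ)) : ℝ) : ℂ)) *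
      ∑ J ∈ Finset.univ.filter
          (fun J : G => J ∈ Sg (barΛ l) ∧ J ∈ Ug (barA a)),
        chΛ l J * (starRingEnd ℂ) (chA a J) * SJ J (barΛ l) (barA a))
    (Ωh : Λ) (hΩ : ∀ a : A, Shat Ωh a ≠ 0)
    (Sinv : A → Λ → ℂ)
    (hSinv1 : ∀ l l' : Λ, ∑ a, Shat l a * Sinv a l' = if l = l' then 1 else 0)
    (hSinv2 : ∀ a a' : A, ∑ l, Sinv a l * Shat l a' = if a = a' then 1 else 0)
    (N3 : Λ → Λ → Λ → ℂ)
    (hN3 : ∀ l m n : Λ,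
      N3 l m n = ∑ a, Shat l a * Shat m a * Shat n a / Shat Ωh a)
    (Cinv : Λ → Λ → ℂ)
    (hCinv : ∀ l m : Λ, ∑ k, N3 l k Ωh * Cinv k m = if l = m then 1 else 0)
    (N : Λ → Λ → Λ → ℂ)
    (hN : ∀ l m n : Λ, N l m n = ∑ k, N3 l m k * Cinv k n) :
    (∀ l m n : Λ, N l m n = N m l n) ∧
    (∀ m n : Λ, N Ωh m n = if n = m then 1 else 0) ∧
    (∀ l m n p : Λ, ∑ k, N l m k * N k n p = ∑ k, N m n k * N l k p) := by
  classical
  set X : Λ → Λ → ℂ := fun k n => ∑ b, Sinv b k * Sinv b n with hX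
  have hM : ∀ l m : Λ, N3 l m Ωh = ∑ a, Shat l a * Shat m a := by
    intro l m
    rw [hN3]
    refine Finset.sum_congr rfl fun a _ => ?_
    rw [mul_div_assoc, div_self (hΩ a), mul_one]
  have hXM : ∀ k j : Λ, ∑ i, X k i * N3 i j Ωh = if k = j then 1 else 0 := by
    intro k j
    calc ∑ i, X k i * N3 i j Ωh
        = ∑ i, ∑ b, ∑ a, Sinv b k * (Shat j a * (Sinv b i * Shat i a)) := by
          refine Finset.sum_congr rfl fun i _ => ?_
          rw [hM, hX]
          rw [Finset.sum_mul_sum]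
          refine Finset.sum_congr rfl fun b _ => Finset.sum_congr rfl fun a _ => ?_
          ring
      _ = ∑ b, ∑ a, Sinv b k * (Shat j a * (∑ i, Sinv b i * Shat i a)) := by
          rw [Finset.sum_comm]
          refine Finset.sum_congr rfl fun b _ => ?_
          rw [Finset.sum_comm]
          refine Finset.sum_congr rfl fun a _ => ?_
          simp [Finset.mul_sum]
      _ = ∑ b, Shat j b * Sinv b k := by
          refine Finset.sum_congr rfl fun b _ => ?_
          simp only [hSinv2]
          simp [mul_comm]
      _ = if k = j then 1 else 0 := by
          rw [show (∑ b, Shat j b * Sinv b k) = ∑ b, Shat j b * Sinv b k from rfl, hSinv1]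
          simp [eq_comm]
  have hCX : ∀ k n : Λ, Cinv k n = X k n := by
    intro k n
    calc Cinv k n = ∑ j, (if k = j then 1 else 0) * Cinv j n := by simp
      _ = ∑ j, (∑ i, X k i * N3 i j Ωh) * Cinv j n := by
          refine Finset.sum_congr rfl fun j _ => ?_
          rw [hXM]
      _ = ∑ j, ∑ i, X k i * (N3 i j Ωh * Cinv j n) := by
          refine Finset.sum_congr rfl fun j _ => ?_
          rw [Finset.sum_mul]
          refine Finset.sum_congr rfl fun i _ => ?_
          ring
      _ = ∑ i, X k i * ∑ j, N3 i j Ωh * Cinv j n := by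
          rw [Finset.sum_comm]
          refine Finset.sum_congr rfl fun i _ => ?_
          rw [Finset.mul_sum]
      _ = X k n := by
          simp only [hCinv]
          simp
  have hNd : ∀ l m n : Λ, N l m n = ∑ a, Shat l a * Shat m a / Shat Ωh a * Sinv a n := by
    intro l m n
    calc N l m n
        = ∑ k, (∑ a, Shat l a * Shat m a * Shat k a / Shat Ωh a) *
            (∑ b, Sinv b k * Sinv b n) := by
          rw [hN]
          refine Finset.sum_congr rfl fun k _ => ?_
          rw [hN3, hCX, hX]
      _ = ∑ k, ∑ a, ∑ b, Shat l a * Shat m a / Shat Ωh a * Sinv b n *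
            (Shat k a * Sinv b k) := by
          refine Finset.sum_congr rfl fun k _ => ?_
          rw [Finset.sum_mul_sum]
          refine Finset.sum_congr rfl fun a _ => Finset.sum_congr rfl fun b _ => ?_
          ring
      _ = ∑ a, ∑ b, Shat l a * Shat m a / Shat Ωh a * Sinv b n *
            (∑ k, Shat k a * Sinv b k) := by
          rw [Finset.sum_comm]
          refine Finset.sum_congr rfl fun a _ => ?_
          rw [Finset.sum_comm]
          refine Finset.sum_congr rfl fun b _ => ?_
          rw [Finset.mul_sum]
      _ = ∑ a, Shat l a * Shat m a / Shat Ωh a * Sinv a n := by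
          refine Finset.sum_congr rfl fun a _ => ?_
          have h1 : ∀ b : A, (∑ k, Shat k a * Sinv b k) = if b = a then 1 else 0 := by
            intro b
            rw [← hSinv2 b a]
            exact Finset.sum_congr rfl fun k _ => mul_comm _ _
          simp only [h1, mul_ite, mul_one, mul_zero]
          simp
  have hcomm : ∀ l m n : Λ, N l m n = N m l n := by
    intro l m n
    rw [hNd, hNd]
    refine Finset.sum_congr rfl fun a _ => ?_
    ring
  have hunit : ∀ m n : Λ, N Ωh m n = if n = m then 1 else 0 := by
    intro m n
    rw [hNd]
    have h2 : ∀ a : A, Shat Ωh a * Shat m a / Shat Ωh a * Sinv a n = Shat m a * Sinv a n := by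
      intro a
      rw [mul_comm (Shat Ωh a) (Shat m a), mul_div_assoc, div_self (hΩ a), mul_one]
    rw [Finset.sum_congr rfl fun a _ => h2 a, hSinv1]
    simp [eq_comm]
  refine ⟨hcomm, hunit, ?_⟩
  intro l m n p
  have key : ∀ x y z : Λ, ∑ k, N x y k * N k z p =
      ∑ a, Shat x a * Shat y a * Shat z a / (Shat Ωh a * Shat Ωh a) * Sinv a p := by
    intro x y z
    calc ∑ k, N x y k * N k z p
        = ∑ k, (∑ a, Shat x a * Shat y a / Shat Ωh a * Sinv a k) *
            (∑ b, Shat k b * Shat z b / Shat Ωh b * Sinv b p) := by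
          refine Finset.sum_congr rfl fun k _ => ?_
          rw [hNd, hNd]
      _ = ∑ k, ∑ a, ∑ b, Shat x a * Shat y a / Shat Ωh a *
            (Shat z b / Shat Ωh b * Sinv b p) * (Sinv a k * Shat k b) := by
          refine Finset.sum_congr rfl fun k _ => ?_
          rw [Finset.sum_mul_sum]
          refine Finset.sum_congr rfl fun a _ => Finset.sum_congr rfl fun b _ => ?_
          ring
      _ = ∑ a, ∑ b, Shat x a * Shat y a / Shat Ωh a *
            (Shat z b / Shat Ωh b * Sinv b p) * (∑ k, Sinv a k * Shat k b) := by
          rw [Finset.sum_comm]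
          refine Finset.sum_congr rfl fun a _ => ?_
          rw [Finset.sum_comm]
          refine Finset.sum_congr rfl fun b _ => ?_
          rw [Finset.mul_sum]
      _ = ∑ a, Shat x a * Shat y a * Shat z a / (Shat Ωh a * Shat Ωh a) * Sinv a p := by
          refine Finset.sum_congr rfl fun a _ => ?_
          simp only [hSinv2, mul_ite, mul_one, mul_zero]
          rw [Finset.sum_ite_eq Finset.univ a
            (fun b => Shat x a * Shat y a / Shat Ωh a * (Shat z b / Shat Ωh b * Sinv b p))]
          simp only [Finset.mem_univ, if_pos]
          ring
  have hlast : ∑ k, N m n k * N l k p = ∑ k, N m n k * N k l p := by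
    refine Finset.sum_congr rfl fun k _ => ?_
    rw [hcomm l k p]
  rw [key l m n, hlast, key m n l]
  refine Finset.sum_congr rfl fun a _ => ?_
  ring
end

section
/- Let A be a finite-dimensional commutative associative unital ℂ-algebra with basis {x_λ}_{λ∈I} and structure constants N_{λμ}^ν given by the Verlinde formula N_{λμ}^ν = ∑_{κ∈I} S_{κλ} S_{κμ} S*_{κν} / S_{κΩ} for a unitary matrix S with S_{κΩ} ≠ 0 for all κ. Then A is semisimple, and its one-dimensional irreducible representations are exactly the maps x_λ ↦ S_{κλ}/S_{κΩ} for κ ∈ I. -/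
/-- Let `N` be given by the Verlinde formula for a unitary matrix
`S` with `S κ Ω ≠ 0`, and consider the fusion algebra on `I → ℂ` with
multiplication determined by the structure constants `N`. Then (i) every `κ`
gives a one-dimensional representation `x_λ ↦ S_{κλ}/S_{κΩ}`; (ii) every
one-dimensional representation is of this form; (iii) the algebra is
semisimple, i.e. isomorphic (as an algebra) to `ℂ^I` with pointwise
multiplication. -/
theorem stmt18 {I : Type*} [Fintype I] [DecidableEq I] (S : I → I → ℂ) (Ω : I)
    (hunit : ∀ κ κ' : I,
      ∑ lam, S κ lam * (starRingEnd ℂ) (S κ' lam) = if κ = κ' then 1 else 0)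
    (hne : ∀ κ : I, S κ Ω ≠ 0)
    (N : I → I → I → ℂ)
    (hN : ∀ lam mu ν : I,
      N lam mu ν = ∑ κ, S κ lam * S κ mu * (starRingEnd ℂ) (S κ ν) / S κ Ω) :
    (∀ κ lam mu : I,
      ∑ ν, N lam mu ν * (S κ ν / S κ Ω) = (S κ lam / S κ Ω) * (S κ mu / S κ Ω)) ∧
    (∀ φ : I → ℂ, (∀ lam mu : I, ∑ ν, N lam mu ν * φ ν = φ lam * φ mu) →
      φ Ω = 1 → ∃ κ : I, ∀ lam : I, φ lam = S κ lam / S κ Ω) ∧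
    (∃ e : (I → ℂ) ≃ₗ[ℂ] (I → ℂ), ∀ f g : I → ℂ,
      e (fun ν => ∑ lam, ∑ mu, f lam * g mu * N lam mu ν) = e f * e g) := by
  classical
  -- column orthogonality
  have hrow1 : (Matrix.of S) * (Matrix.of S).conjTranspose = 1 := by
    ext κ κ'
    rw [Matrix.mul_apply, Matrix.one_apply]
    have h := hunit κ κ'
    simp only [starRingEnd_apply] at h
    simpa [Matrix.conjTranspose_apply, Matrix.of_apply] using h
  have hcol1 : (Matrix.of S).conjTranspose * (Matrix.of S) = 1 :=
    mul_eq_one_comm.mp hrow1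
  have hcol : ∀ lam lam' : I,
      ∑ κ, (starRingEnd ℂ) (S κ lam) * S κ lam' = if lam = lam' then 1 else 0 := by
    intro lam lam'
    have h := congrFun (congrFun hcol1 lam) lam'
    rw [Matrix.mul_apply, Matrix.one_apply] at h
    simp only [Matrix.conjTranspose_apply, Matrix.of_apply] at h
    simp only [starRingEnd_apply]
    exact h
  -- Part (i)
  have part1 : ∀ κ lam mu : I,
      ∑ ν, N lam mu ν * (S κ ν / S κ Ω) = (S κ lam / S κ Ω) * (S κ mu / S κ Ω) := by
    intro κ lam mu
    calc ∑ ν, N lam mu ν * (S κ ν / S κ Ω)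
        = ∑ ν, ∑ κ', (S κ' lam * S κ' mu / (S κ' Ω * S κ Ω)) *
            (S κ ν * (starRingEnd ℂ) (S κ' ν)) := by
          refine Finset.sum_congr rfl fun ν _ => ?_
          rw [hN, Finset.sum_mul]
          refine Finset.sum_congr rfl fun κ' _ => ?_
          ring
      _ = ∑ κ', (S κ' lam * S κ' mu / (S κ' Ω * S κ Ω)) *
            ∑ ν, S κ ν * (starRingEnd ℂ) (S κ' ν) := by
          rw [Finset.sum_comm]
          exact Finset.sum_congr rfl fun κ' _ => (Finset.mul_sum _ _ _).symm
      _ = (S κ lam / S κ Ω) * (S κ mu / S κ Ω) := by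
          simp_rw [hunit, mul_ite, mul_one, mul_zero]
          rw [Finset.sum_ite_eq Finset.univ κ
            (fun κ' => S κ' lam * S κ' mu / (S κ' Ω * S κ Ω))]
          simp only [Finset.mem_univ, if_pos]
          field_simp
  refine ⟨part1, ?_, ?_⟩
  · -- Part (ii)
    intro φ hmul hΩ
    set a : I → ℂ := fun κ => (∑ lam, φ lam * (starRingEnd ℂ) (S κ lam)) * S κ Ω with ha
    have haκ : ∀ κ, a κ = ∑ lam, φ lam * ((starRingEnd ℂ) (S κ lam) * S κ Ω) := by
      intro κ
      show (∑ lam, φ lam * (starRingEnd ℂ) (S κ lam)) * S κ Ω = _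
      rw [Finset.sum_mul]
      exact Finset.sum_congr rfl fun lam _ => by ring
    -- reconstruction of φ from a
    have hrec : ∀ lam, ∑ κ, a κ * (S κ lam / S κ Ω) = φ lam := by
      intro lam
      have hterm : ∀ κ, a κ * (S κ lam / S κ Ω)
          = ∑ lam', φ lam' * ((starRingEnd ℂ) (S κ lam') * S κ lam) := by
        intro κ
        rw [haκ κ, Finset.sum_mul]
        refine Finset.sum_congr rfl fun lam' _ => ?_
        have h0 := hne κ
        field_simp
      calc ∑ κ, a κ * (S κ lam / S κ Ω)
          = ∑ κ, ∑ lam', φ lam' * ((starRingEnd ℂ) (S κ lam') * S κ lam) :=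
            Finset.sum_congr rfl fun κ _ => hterm κ
        _ = ∑ lam', φ lam' * ∑ κ, (starRingEnd ℂ) (S κ lam') * S κ lam := by
            rw [Finset.sum_comm]
            exact Finset.sum_congr rfl fun lam' _ => (Finset.mul_sum _ _ _).symm
        _ = φ lam := by
            simp_rw [hcol, mul_ite, mul_one, mul_zero]
            rw [Finset.sum_ite_eq' Finset.univ lam φ]
            simp
    -- sum of a is 1
    have hsum : ∑ κ, a κ = 1 := by
      calc ∑ κ, a κ = ∑ κ, ∑ lam, φ lam * ((starRingEnd ℂ) (S κ lam) * S κ Ω) :=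
            Finset.sum_congr rfl fun κ _ => haκ κ
        _ = ∑ lam, φ lam * ∑ κ, (starRingEnd ℂ) (S κ lam) * S κ Ω := by
            rw [Finset.sum_comm]
            exact Finset.sum_congr rfl fun lam _ => (Finset.mul_sum _ _ _).symm
        _ = 1 := by
            simp_rw [hcol, mul_ite, mul_one, mul_zero]
            rw [Finset.sum_ite_eq' Finset.univ Ω φ]
            simpa using hΩ
    -- a helper for factoring triple sums
    have key : ∀ (p q r : I → ℂ) (c : ℂ),
        ∑ lam, ∑ mu, ∑ ν, p lam * (q mu * (r ν * c))
          = (∑ lam, p lam) * (∑ mu, q mu) * (∑ ν, r ν) * c := by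
      intro p q r c
      symm
      rw [mul_assoc, mul_assoc, Finset.sum_mul]
      refine Finset.sum_congr rfl fun lam _ => ?_
      rw [Finset.sum_mul, Finset.mul_sum]
      refine Finset.sum_congr rfl fun mu _ => ?_
      rw [Finset.sum_mul, Finset.mul_sum, Finset.mul_sum]
    -- idempotency / orthogonality of a
    have hprod : ∀ κ0 κ1, a κ0 * a κ1 = if κ0 = κ1 then a κ0 else 0 := by
      intro κ0 κ1
      have e1 : a κ0 * a κ1 = ∑ lam, ∑ mu, (φ lam * φ mu) *
          ((starRingEnd ℂ) (S κ0 lam) * (starRingEnd ℂ) (S κ1 mu) *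
            (S κ0 Ω * S κ1 Ω)) := by
        rw [haκ κ0, haκ κ1, Finset.sum_mul_sum]
        refine Finset.sum_congr rfl fun lam _ => Finset.sum_congr rfl fun mu _ => by ring
      have e2 : ∀ lam mu, (φ lam * φ mu) *
          ((starRingEnd ℂ) (S κ0 lam) * (starRingEnd ℂ) (S κ1 mu) *
            (S κ0 Ω * S κ1 Ω))
          = ∑ ν, ∑ κ, (S κ lam * (starRingEnd ℂ) (S κ0 lam)) *
              ((S κ mu * (starRingEnd ℂ) (S κ1 mu)) *
                (((starRingEnd ℂ) (S κ ν) * φ ν) *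
                  (S κ0 Ω * S κ1 Ω / S κ Ω))) := by
        intro lam mu
        rw [← hmul lam mu, Finset.sum_mul]
        refine Finset.sum_congr rfl fun ν _ => ?_
        rw [hN, Finset.sum_mul, Finset.sum_mul]
        refine Finset.sum_congr rfl fun κ _ => ?_
        ring
      calc a κ0 * a κ1
          = ∑ lam, ∑ mu, ∑ ν, ∑ κ, (S κ lam * (starRingEnd ℂ) (S κ0 lam)) *
              ((S κ mu * (starRingEnd ℂ) (S κ1 mu)) *
                (((starRingEnd ℂ) (S κ ν) * φ ν) *
                  (S κ0 Ω * S κ1 Ω / S κ Ω))) := by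
            rw [e1]
            exact Finset.sum_congr rfl fun lam _ => Finset.sum_congr rfl fun mu _ =>
              e2 lam mu
        _ = ∑ lam, ∑ mu, ∑ κ, ∑ ν, (S κ lam * (starRingEnd ℂ) (S κ0 lam)) *
              ((S κ mu * (starRingEnd ℂ) (S κ1 mu)) *
                (((starRingEnd ℂ) (S κ ν) * φ ν) *
                  (S κ0 Ω * S κ1 Ω / S κ Ω))) :=
            Finset.sum_congr rfl fun lam _ => Finset.sum_congr rfl fun mu _ =>
              Finset.sum_comm
        _ = ∑ lam, ∑ κ, ∑ mu, ∑ ν, (S κ lam * (starRingEnd ℂ) (S κ0 lam)) *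
              ((S κ mu * (starRingEnd ℂ) (S κ1 mu)) *
                (((starRingEnd ℂ) (S κ ν) * φ ν) *
                  (S κ0 Ω * S κ1 Ω / S κ Ω))) :=
            Finset.sum_congr rfl fun lam _ => Finset.sum_comm
        _ = ∑ κ, ∑ lam, ∑ mu, ∑ ν, (S κ lam * (starRingEnd ℂ) (S κ0 lam)) *
              ((S κ mu * (starRingEnd ℂ) (S κ1 mu)) *
                (((starRingEnd ℂ) (S κ ν) * φ ν) *
                  (S κ0 Ω * S κ1 Ω / S κ Ω))) := Finset.sum_comm
        _ = ∑ κ, (∑ lam, S κ lam * (starRingEnd ℂ) (S κ0 lam)) *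
              (∑ mu, S κ mu * (starRingEnd ℂ) (S κ1 mu)) *
              (∑ ν, (starRingEnd ℂ) (S κ ν) * φ ν) *
              (S κ0 Ω * S κ1 Ω / S κ Ω) :=
            Finset.sum_congr rfl fun κ _ => key _ _ _ _
        _ = if κ0 = κ1 then a κ0 else 0 := by
            simp_rw [hunit, ite_mul, one_mul, zero_mul]
            rw [Finset.sum_ite_eq' Finset.univ κ0 (fun κ =>
              (if κ = κ1 then (1:ℂ) else 0) * (∑ ν, (starRingEnd ℂ) (S κ ν) * φ ν) *
                (S κ0 Ω * S κ1 Ω / S κ Ω))]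
            simp only [Finset.mem_univ, if_pos]
            by_cases h : κ0 = κ1
            · subst h
              rw [if_pos rfl, if_pos rfl, one_mul, haκ κ0]
              have hd : S κ0 Ω * S κ0 Ω / S κ0 Ω = S κ0 Ω := by
                field_simp
              rw [hd, Finset.sum_mul]
              refine Finset.sum_congr rfl fun ν _ => ?_
              ring
            · rw [if_neg h, if_neg h, zero_mul, zero_mul]
      -- done hprod
    -- pick the κ with a κ ≠ 0
    have hex : ∃ κ, a κ ≠ 0 := by
      by_contra h
      push_neg at h
      rw [Finset.sum_eq_zero (fun κ _ => h κ)] at hsum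
      exact zero_ne_one hsum
    obtain ⟨κ, hκ⟩ := hex
    have h1 : a κ = 1 := by
      have hself := hprod κ κ
      rw [if_pos rfl] at hself
      have h2 : a κ * (a κ - 1) = 0 := by rw [mul_sub, mul_one, hself, sub_self]
      rcases mul_eq_zero.mp h2 with h | h
      · exact absurd h hκ
      · exact sub_eq_zero.mp h
    refine ⟨κ, fun lam => ?_⟩
    rw [← hrec lam]
    rw [Finset.sum_eq_single κ]
    · rw [h1, one_mul]
    · intro κ' _ hne'
      have hz := hprod κ' κ
      rw [if_neg hne'] at hz
      rcases mul_eq_zero.mp hz with h | h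
      · rw [h, zero_mul]
      · exact absurd h hκ
    · intro h; exact absurd (Finset.mem_univ κ) h
  · -- Part (iii)
    set M : Matrix I I ℂ := Matrix.of fun κ lam => S κ lam / S κ Ω with hM
    set M' : Matrix I I ℂ := Matrix.of fun lam κ => (starRingEnd ℂ) (S κ lam) * S κ Ω with hM'
    have hMM' : M * M' = 1 := by
      ext κ κ'
      have hstep : ∑ lam, (S κ lam / S κ Ω) * ((starRingEnd ℂ) (S κ' lam) * S κ' Ω)
          = (S κ' Ω / S κ Ω) * ∑ lam, S κ lam * (starRingEnd ℂ) (S κ' lam) := by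
        rw [Finset.mul_sum]
        exact Finset.sum_congr rfl fun lam _ => by ring
      simp only [Matrix.mul_apply, hM, hM', Matrix.of_apply, Matrix.one_apply]
      rw [hstep, hunit]
      by_cases h : κ = κ'
      · subst h
        simp [div_self (hne κ)]
      · simp [h]
    have hM'M : M' * M = 1 := by
      ext lam lam'
      have hstep : ∑ κ, ((starRingEnd ℂ) (S κ lam) * S κ Ω) * (S κ lam' / S κ Ω)
          = ∑ κ, (starRingEnd ℂ) (S κ lam) * S κ lam' := by
        refine Finset.sum_congr rfl fun κ _ => ?_
        have h0 := hne κ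
        field_simp
      simp only [Matrix.mul_apply, hM, hM', Matrix.of_apply, Matrix.one_apply]
      rw [hstep, hcol]
    refine ⟨LinearEquiv.ofLinear (Matrix.toLin' M) (Matrix.toLin' M') ?_ ?_, ?_⟩
    · rw [← Matrix.toLin'_mul, hMM', Matrix.toLin'_one]
    · rw [← Matrix.toLin'_mul, hM'M, Matrix.toLin'_one]
    · intro f g
      funext κ
      simp only [LinearEquiv.ofLinear_apply, Matrix.toLin'_apply, Matrix.mulVec,
        dotProduct, hM, Matrix.of_apply, Pi.mul_apply]
      calc ∑ ν, (S κ ν / S κ Ω) * (∑ lam, ∑ mu, f lam * g mu * N lam mu ν)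
          = ∑ ν, ∑ lam, ∑ mu, (f lam * g mu) * (N lam mu ν * (S κ ν / S κ Ω)) := by
            refine Finset.sum_congr rfl fun ν _ => ?_
            rw [Finset.mul_sum]
            refine Finset.sum_congr rfl fun lam _ => ?_
            rw [Finset.mul_sum]
            refine Finset.sum_congr rfl fun mu _ => ?_
            ring
        _ = ∑ lam, ∑ ν, ∑ mu, (f lam * g mu) * (N lam mu ν * (S κ ν / S κ Ω)) :=
            Finset.sum_comm
        _ = ∑ lam, ∑ mu, ∑ ν, (f lam * g mu) * (N lam mu ν * (S κ ν / S κ Ω)) :=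
            Finset.sum_congr rfl fun lam _ => Finset.sum_comm
        _ = ∑ lam, ∑ mu, (f lam * g mu) *
              ((S κ lam / S κ Ω) * (S κ mu / S κ Ω)) := by
            refine Finset.sum_congr rfl fun lam _ => Finset.sum_congr rfl fun mu _ => ?_
            rw [← Finset.mul_sum, part1 κ lam mu]
        _ = (∑ lam, (S κ lam / S κ Ω) * f lam) * (∑ mu, (S κ mu / S κ Ω) * g mu) := by
            rw [Finset.sum_mul_sum]
            exact Finset.sum_congr rfl fun lam _ => Finset.sum_congr rfl fun mu _ => by
              ring
end
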